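/- arXiv:1604.00618 — 5 statements merged into one kernel-verified Lean document; each statement's English description precedes it below -/
import Mathlib

section
/- Let X and Y be Banach spaces. Suppose there exists a function η : (0,∞) → (0,∞) such that for every δ > 0, every finite family x₁*, …, xₙ* in the closed unit ball of X*, and every x₀ ∈ X with ‖x₀‖ = 1, there exist a bounded linear operator P : X → X with ‖P‖ = 1 and a bounded linear operator i : P(X) → X with ‖i‖ = 1 (where P(X) denotes the range of P with the norm inherited from X) such that: (1) ‖P* x_j* − x_j*‖ < δ for j = 1, …, n; (2) ‖i(P x₀) − x₀‖ < δ; (3) P(i(z)) = z for every z ∈ P(X); (4) the pair (P(X), Y) has the BPBp for compact operators with the function η. Then the pair (X, Y) has the BPBp for compact operators. -/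
open MeasureTheory

noncomputable section

/-- A pair `(X, Y)` of normed spaces has the Bishop–Phelps–Bollobás property for compact
operators with the function `η`. -/
def BPBpCompactWith (𝕜 : Type*) [RCLike 𝕜] (X Y : Type*) [NormedAddCommGroup X]
    [NormedSpace 𝕜 X] [NormedAddCommGroup Y] [NormedSpace 𝕜 Y] (η : ℝ → ℝ) : Prop :=
  ∀ ε : ℝ, 0 < ε → 0 < η ε ∧
    ∀ T : X →L[𝕜] Y, IsCompactOperator T → ‖T‖ = 1 →
      ∀ x₀ : X, ‖x₀‖ = 1 → 1 - η ε < ‖T x₀‖ →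
        ∃ S : X →L[𝕜] Y, ∃ x₁ : X, IsCompactOperator S ∧ ‖S‖ = 1 ∧ ‖x₁‖ = 1 ∧
          ‖S x₁‖ = 1 ∧ ‖x₀ - x₁‖ < ε ∧ ‖S - T‖ < ε

/-- A pair `(X, Y)` has the Bishop–Phelps–Bollobás property for compact operators. -/
def BPBpCompact (𝕜 : Type*) [RCLike 𝕜] (X Y : Type*) [NormedAddCommGroup X]
    [NormedSpace 𝕜 X] [NormedAddCommGroup Y] [NormedSpace 𝕜 Y] : Prop :=
  ∃ η : ℝ → ℝ, BPBpCompactWith 𝕜 X Y η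

open NormedSpace ContinuousLinearMap Set Metric

section helpers

variable {𝕜 : Type*} [RCLike 𝕜] {X Y : Type*}
  [NormedAddCommGroup X] [NormedSpace 𝕜 X]
  [NormedAddCommGroup Y] [NormedSpace 𝕜 Y]

lemma aux_norm_apply_le {f : X →L[𝕜] Y} {C : ℝ} (hC : 0 ≤ C)
    (h : ∀ v : X, ‖v‖ ≤ 1 → ‖f v‖ ≤ C) (x : X) : ‖f x‖ ≤ C * ‖x‖ := by
  rcases eq_or_ne x 0 with rfl | hx
  · simp [hC]
  · have hxn : (0:ℝ) < ‖x‖ := norm_pos_iff.2 hx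
    set a : 𝕜 := (‖x‖ : 𝕜) with ha
    have ha0 : a ≠ 0 := by
      simp [ha, RCLike.ofReal_eq_zero, hxn.ne']
    have hv : ‖a⁻¹ • x‖ ≤ 1 := by
      rw [norm_smul, norm_inv, ha, RCLike.norm_ofReal, abs_of_nonneg hxn.le,
        inv_mul_cancel₀ hxn.ne']
    have hx' : x = a • (a⁻¹ • x) := by rw [smul_smul, mul_inv_cancel₀ ha0, one_smul]
    calc ‖f x‖ = ‖f (a • (a⁻¹ • x))‖ := by rw [← hx']
      _ = ‖a‖ * ‖f (a⁻¹ • x)‖ := by rw [_root_.map_smul, norm_smul]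
      _ ≤ ‖a‖ * C := by
          exact mul_le_mul_of_nonneg_left (h _ hv) (norm_nonneg _)
      _ = C * ‖x‖ := by
          rw [ha, RCLike.norm_ofReal, abs_of_nonneg hxn.le]; ring

lemma opNorm_le_of_unit {f : X →L[𝕜] Y} {C : ℝ} (hC : 0 ≤ C)
    (h : ∀ v : X, ‖v‖ ≤ 1 → ‖f v‖ ≤ C) : ‖f‖ ≤ C :=
  f.opNorm_le_bound hC (aux_norm_apply_le hC h)

lemma net_lemma {T : X →L[𝕜] Y} (hT : IsCompactOperator T) (hTn : ‖T‖ ≤ 1)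
    {δ : ℝ} (hδ : 0 < δ) :
    ∃ (n : ℕ) (x' : Fin n → StrongDual 𝕜 X), (∀ j, ‖x' j‖ ≤ 1) ∧
      ∀ g : StrongDual 𝕜 Y, ‖g‖ ≤ 1 → ∃ j, ‖g.comp T - x' j‖ ≤ δ := by
  have hδ3 : (0:ℝ) < δ/3 := by linarith
  have hTl : IsCompactOperator (T : X →ₗ[𝕜] Y) := hT
  have hK : IsCompact (closure (⇑T '' Metric.closedBall 0 1)) :=
    hTl.isCompact_closure_image_closedBall 1
  obtain ⟨t, htf, htcover⟩ :=
    Metric.totallyBounded_iff.1 (hK.totallyBounded.subset subset_closure) (δ/3) hδ3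
  haveI : Fintype ↥t := htf.fintype
  set Φ : StrongDual 𝕜 Y → (↥t → 𝕜) := fun g k => g (k : Y) with hΦ
  set C : ℝ := ((Finset.univ.sup (fun k : ↥t => ‖(k:Y)‖₊ ) : NNReal) : ℝ) with hCdef
  have hC : ∀ k : ↥t, ‖(k:Y)‖ ≤ C := by
    intro k
    rw [hCdef]
    exact_mod_cast Finset.le_sup (f := fun k : ↥t => ‖(k:Y)‖₊) (Finset.mem_univ k)
  have hΦbound : ∀ g : StrongDual 𝕜 Y, ‖g‖ ≤ 1 → Φ g ∈ Metric.closedBall (0 : ↥t → 𝕜) C := by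
    intro g hg
    rw [Metric.mem_closedBall, dist_zero_right]
    have hC0 : (0:ℝ) ≤ C := by rw [hCdef]; positivity
    refine (pi_norm_le_iff_of_nonneg hC0).2 fun k => ?_
    calc ‖g (k:Y)‖ ≤ ‖g‖ * ‖(k:Y)‖ := g.le_opNorm _
      _ ≤ 1 * C := mul_le_mul hg (hC k) (norm_nonneg _) zero_le_one
      _ = C := one_mul _
  have hA : TotallyBounded (Φ '' Metric.closedBall 0 1) := by
    refine (Metric.isBounded_closedBall (x := (0 : ↥t → 𝕜))
      (r := C)).isCompact_closure.totallyBounded.subset ?_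
    rintro p ⟨g, hg, rfl⟩
    exact subset_closure (hΦbound g (mem_closedBall_zero_iff.1 hg))
  obtain ⟨s, hs_sub, hsfin, hscover⟩ := finite_approx_of_totallyBounded hA (δ/3) hδ3
  haveI : Fintype ↥s := hsfin.fintype
  have hsel : ∀ c : ↥s, ∃ g : StrongDual 𝕜 Y, g ∈ Metric.closedBall 0 1 ∧ Φ g = (c : ↥t → 𝕜) :=
    fun c => hs_sub c.2
  choose G hGmem hGeq using hsel
  let e := Fintype.equivFin ↥s
  refine ⟨Fintype.card ↥s, fun j => (G (e.symm j)).comp T, ?_, ?_⟩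
  · intro j
    calc ‖(G (e.symm j)).comp T‖ ≤ ‖G (e.symm j)‖ * ‖T‖ := opNorm_comp_le _ _
      _ ≤ 1 * 1 := mul_le_mul (mem_closedBall_zero_iff.1 (hGmem _)) hTn
            (norm_nonneg _) zero_le_one
      _ = 1 := one_mul _
  · intro g hg
    have hmem : Φ g ∈ ⋃ c ∈ s, Metric.ball c (δ/3) :=
      hscover (mem_image_of_mem Φ (mem_closedBall_zero_iff.2 hg))
    rw [Set.mem_iUnion₂] at hmem
    obtain ⟨c, hcs, hcball⟩ := hmem
    refine ⟨e ⟨c, hcs⟩, ?_⟩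
    simp only [Equiv.symm_apply_apply]
    set g' := G ⟨c, hcs⟩ with hg'
    have hpt : ∀ k : ↥t, ‖g (k:Y) - g' (k:Y)‖ < δ/3 := by
      intro k
      have hd : dist (Φ g) (Φ g') < δ/3 := by
        rw [hg', hGeq]; exact Metric.mem_ball.1 hcball
      have := (dist_pi_lt_iff hδ3).1 hd k
      rwa [dist_eq_norm] at this
    have hgg' : ‖g - g'‖ ≤ 2 := by
      have h1 : ‖g'‖ ≤ 1 := mem_closedBall_zero_iff.1 (hGmem _)
      calc ‖g - g'‖ ≤ ‖g‖ + ‖g'‖ := norm_sub_le _ _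
        _ ≤ 2 := by linarith
    refine opNorm_le_of_unit hδ.le ?_
    intro v hv
    have hTv : T v ∈ ⇑T '' Metric.closedBall 0 1 :=
      mem_image_of_mem _ (mem_closedBall_zero_iff.2 hv)
    have hmem2 : T v ∈ ⋃ y ∈ t, Metric.ball y (δ/3) := htcover hTv
    rw [Set.mem_iUnion₂] at hmem2
    obtain ⟨y, hyt, hy⟩ := hmem2
    have hy' : ‖T v - y‖ < δ/3 := by
      rw [← dist_eq_norm]; exact Metric.mem_ball.1 hy
    have h1 : ‖(g - g') (T v - y)‖ ≤ 2 * (δ/3) :=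
      calc ‖(g - g') (T v - y)‖ ≤ ‖g - g'‖ * ‖T v - y‖ := (g - g').le_opNorm _
        _ ≤ 2 * (δ/3) := mul_le_mul hgg' hy'.le (norm_nonneg _) (by norm_num)
    have h2 : ‖(g - g') y‖ < δ/3 := by
      have := hpt ⟨y, hyt⟩
      simpa [ContinuousLinearMap.sub_apply] using this
    calc ‖(g.comp T - g'.comp T) v‖ = ‖(g - g') (T v)‖ := by
          simp [ContinuousLinearMap.sub_apply, ContinuousLinearMap.comp_apply]
      _ = ‖(g - g') (T v - y) + (g - g') y‖ := by rw [map_sub]; ring_nf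
      _ ≤ ‖(g - g') (T v - y)‖ + ‖(g - g') y‖ := norm_add_le _ _
      _ ≤ 2 * (δ/3) + δ/3 := add_le_add h1 h2.le
      _ = δ := by ring

end helpers

set_option maxHeartbeats 2000000 in
/-- Main technical lemma (Lemma 2.1). -/
theorem main_technical_lemma {𝕜 : Type*} [RCLike 𝕜] {X Y : Type*}
    [NormedAddCommGroup X] [NormedSpace 𝕜 X] [CompleteSpace X]
    [NormedAddCommGroup Y] [NormedSpace 𝕜 Y] [CompleteSpace Y]
    (η : ℝ → ℝ) (hη : ∀ ε : ℝ, 0 < ε → 0 < η ε)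
    (h : ∀ δ : ℝ, 0 < δ → ∀ (n : ℕ) (x' : Fin n → StrongDual 𝕜 X),
      (∀ j, ‖x' j‖ ≤ 1) → ∀ x₀ : X, ‖x₀‖ = 1 →
        ∃ (P : X →L[𝕜] X) (i : ↥(LinearMap.range (P : X →ₗ[𝕜] X)) →L[𝕜] X),
          ‖P‖ = 1 ∧ ‖i‖ = 1 ∧
          (∀ j, ‖(x' j).comp P - x' j‖ < δ) ∧
          ‖i ⟨P x₀, ⟨x₀, rfl⟩⟩ - x₀‖ < δ ∧
          (∀ z : ↥(LinearMap.range (P : X →ₗ[𝕜] X)), P (i z) = (z : X)) ∧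
          BPBpCompactWith 𝕜 (↥(LinearMap.range (P : X →ₗ[𝕜] X))) Y η) :
    BPBpCompact 𝕜 X Y := by
  refine ⟨fun ε => min (min (η (ε/3) / 2) (ε/9)) (1/4), fun ε hε => ?_⟩
  have hε3 : (0:ℝ) < ε/3 := by linarith
  set d : ℝ := min (min (η (ε/3) / 2) (ε/9)) (1/4) with hddef
  have hd : 0 < d := by
    have := hη (ε/3) hε3
    simp only [hddef, lt_min_iff]
    refine ⟨⟨by linarith, by linarith⟩, by norm_num⟩
  have hd_η : 2 * d ≤ η (ε/3) := by
    have h1 : d ≤ η (ε/3) / 2 := le_trans (min_le_left _ _) (min_le_left _ _)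
    linarith
  have hd_ε : d ≤ ε/9 := le_trans (min_le_left _ _) (min_le_right _ _)
  have hd_4 : d ≤ 1/4 := min_le_right _ _
  refine ⟨hd, ?_⟩
  intro T hT hTn x₀ hx₀ hTx₀
  obtain ⟨n, x', hx'le, hnet⟩ := net_lemma hT hTn.le hd
  obtain ⟨P, i, hPn, hin, hx'P, hiPx₀, hPi, hBPB⟩ := h d hd n x' hx'le x₀ hx₀
  set Ph : X →L[𝕜] ↥(LinearMap.range (P : X →ₗ[𝕜] X)) := P.codRestrict (LinearMap.range (P : X →ₗ[𝕜] X)) (fun x => LinearMap.mem_range_self (P : X →ₗ[𝕜] X) x) with hPh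
  have hPh_coe : ∀ x : X, ((Ph x : X)) = P x := fun _ => rfl
  have hPh_norm : ∀ x : X, ‖Ph x‖ = ‖P x‖ := fun _ => rfl
  have hPh_le : ∀ x : X, ‖Ph x‖ ≤ ‖x‖ := by
    intro x
    rw [hPh_norm]
    calc ‖P x‖ ≤ ‖P‖ * ‖x‖ := P.le_opNorm x
      _ = ‖x‖ := by rw [hPn, one_mul]
  have hi_le : ∀ z : ↥(LinearMap.range (P : X →ₗ[𝕜] X)), ‖i z‖ ≤ ‖z‖ := by
    intro z
    calc ‖i z‖ ≤ ‖i‖ * ‖z‖ := i.le_opNorm z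
      _ = ‖z‖ := by rw [hin, one_mul]
  -- Claim 1
  have claim1 : ∀ x : X, ‖T (i (Ph x)) - T x‖ ≤ 4 * d * ‖x‖ := by
    intro x
    have hM : (0:ℝ) ≤ 4 * d * ‖x‖ := by positivity
    refine NormedSpace.norm_le_dual_bound 𝕜 _ hM ?_
    have key : ∀ g : StrongDual 𝕜 Y, ‖g‖ ≤ 1 →
        ‖g (T (i (Ph x)) - T x)‖ ≤ 4 * d * ‖x‖ := by
      intro g hg
      obtain ⟨j, hj⟩ := hnet g hg
      have hiPhx : ‖i (Ph x)‖ ≤ ‖x‖ := le_trans (hi_le _) (hPh_le _)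
      have hw : ‖i (Ph x) - x‖ ≤ 2 * ‖x‖ := by
        calc ‖i (Ph x) - x‖ ≤ ‖i (Ph x)‖ + ‖x‖ := norm_sub_le _ _
          _ ≤ 2 * ‖x‖ := by linarith
      have hstep1 : ‖g (T (i (Ph x)) - T x)‖
          ≤ ‖x' j (i (Ph x)) - x' j x‖ + 2 * d * ‖x‖ := by
        have e1 : g (T (i (Ph x)) - T x) = (g.comp T) (i (Ph x) - x) := by
          simp [ContinuousLinearMap.comp_apply, map_sub]
        have e2 : (g.comp T) (i (Ph x) - x)
            = (g.comp T - x' j) (i (Ph x) - x) + (x' j (i (Ph x)) - x' j x) := by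
          simp only [ContinuousLinearMap.sub_apply, map_sub]
          ring
        rw [e1, e2]
        refine le_trans (norm_add_le _ _) ?_
        have hb : ‖(g.comp T - x' j) (i (Ph x) - x)‖ ≤ d * (2 * ‖x‖) := by
          calc ‖(g.comp T - x' j) (i (Ph x) - x)‖
              ≤ ‖g.comp T - x' j‖ * ‖i (Ph x) - x‖ := (g.comp T - x' j).le_opNorm _
            _ ≤ d * (2 * ‖x‖) := mul_le_mul hj hw (norm_nonneg _) hd.le
        linarith
      have hPiPhx : P (i (Ph x)) = P x := by
        have := hPi (Ph x)
        rw [this, hPh_coe]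
      have hxj_op : ‖(x' j).comp P - x' j‖ ≤ d := (hx'P j).le
      have hstep2 : ‖x' j (i (Ph x)) - x' j x‖ ≤ 2 * d * ‖x‖ := by
        have e3 : x' j (i (Ph x)) - x' j x
            = -(((x' j).comp P - x' j) (i (Ph x))) + (((x' j).comp P - x' j) x) := by
          simp only [ContinuousLinearMap.sub_apply, ContinuousLinearMap.comp_apply, hPiPhx]
          ring
        rw [e3]
        refine le_trans (norm_add_le _ _) ?_
        rw [norm_neg]
        have b1 : ‖((x' j).comp P - x' j) (i (Ph x))‖ ≤ d * ‖x‖ := by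
          calc ‖((x' j).comp P - x' j) (i (Ph x))‖
              ≤ ‖(x' j).comp P - x' j‖ * ‖i (Ph x)‖ := ((x' j).comp P - x' j).le_opNorm _
            _ ≤ d * ‖x‖ := mul_le_mul hxj_op hiPhx (norm_nonneg _) hd.le
        have b2 : ‖((x' j).comp P - x' j) x‖ ≤ d * ‖x‖ := by
          calc ‖((x' j).comp P - x' j) x‖
              ≤ ‖(x' j).comp P - x' j‖ * ‖x‖ := ((x' j).comp P - x' j).le_opNorm _
            _ ≤ d * ‖x‖ := mul_le_mul_of_nonneg_right hxj_op (norm_nonneg _)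
        linarith
      calc ‖g (T (i (Ph x)) - T x)‖ ≤ ‖x' j (i (Ph x)) - x' j x‖ + 2 * d * ‖x‖ := hstep1
        _ ≤ 2 * d * ‖x‖ + 2 * d * ‖x‖ := by linarith
        _ = 4 * d * ‖x‖ := by ring
    intro f
    rcases eq_or_ne f 0 with rfl | hf
    · simp [hM]
    · have hfn : (0:ℝ) < ‖f‖ := norm_pos_iff.2 hf
      set a : 𝕜 := (‖f‖ : 𝕜) with ha
      have ha0 : a ≠ 0 := by simp [ha, RCLike.ofReal_eq_zero, hfn.ne']
      have hgnorm : ‖a⁻¹ • f‖ ≤ 1 := by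
        rw [norm_smul, norm_inv, ha, RCLike.norm_ofReal, abs_of_nonneg hfn.le,
          inv_mul_cancel₀ hfn.ne']
      have hfeq : f = a • (a⁻¹ • f) := by rw [smul_smul, mul_inv_cancel₀ ha0, one_smul]
      calc ‖f (T (i (Ph x)) - T x)‖
          = ‖(a • (a⁻¹ • f)) (T (i (Ph x)) - T x)‖ := by rw [← hfeq]
        _ = ‖a‖ * ‖(a⁻¹ • f) (T (i (Ph x)) - T x)‖ := by
            rw [ContinuousLinearMap.smul_apply, norm_smul]
        _ ≤ ‖a‖ * (4 * d * ‖x‖) := mul_le_mul_of_nonneg_left (key _ hgnorm) (norm_nonneg _)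
        _ = 4 * d * ‖x‖ * ‖f‖ := by
            rw [ha, RCLike.norm_ofReal, abs_of_nonneg hfn.le]; ring
  -- compressed operator
  obtain ⟨Tt, hTt⟩ : ∃ Tt : ↥(LinearMap.range (P : X →ₗ[𝕜] X)) →L[𝕜] Y, Tt = T.comp i := ⟨_, rfl⟩
  have hTtc : IsCompactOperator Tt := by rw [hTt]; exact hT.comp_clm i
  have hTt_le : ‖Tt‖ ≤ 1 := by
    rw [hTt]
    calc ‖T.comp i‖ ≤ ‖T‖ * ‖i‖ := ContinuousLinearMap.opNorm_comp_le _ _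
      _ = 1 := by rw [hTn, hin, one_mul]
  have hiPx₀' : ‖i (Ph x₀) - x₀‖ < d := hiPx₀
  have hTtPh : Tt (Ph x₀) = T (i (Ph x₀)) := by rw [hTt]; rfl
  have hkey : 1 - 2*d < ‖Tt (Ph x₀)‖ := by
    have h2 : ‖T (i (Ph x₀)) - T x₀‖ ≤ ‖i (Ph x₀) - x₀‖ := by
      rw [← map_sub]
      calc ‖T (i (Ph x₀) - x₀)‖ ≤ ‖T‖ * ‖i (Ph x₀) - x₀‖ := T.le_opNorm _
        _ = ‖i (Ph x₀) - x₀‖ := by rw [hTn, one_mul]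
    have h3 : ‖T x₀‖ ≤ ‖T (i (Ph x₀))‖ + ‖T (i (Ph x₀)) - T x₀‖ := by
      calc ‖T x₀‖ = ‖T (i (Ph x₀)) - (T (i (Ph x₀)) - T x₀)‖ := by
            congr 1; abel
        _ ≤ ‖T (i (Ph x₀))‖ + ‖T (i (Ph x₀)) - T x₀‖ := norm_sub_le _ _
    rw [hTtPh]
    linarith
  obtain ⟨b, hb⟩ : ∃ b : ℝ, b = ‖Ph x₀‖ := ⟨_, rfl⟩
  obtain ⟨c, hc⟩ : ∃ c : ℝ, c = ‖Tt‖ := ⟨_, rfl⟩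
  have hb0 : 0 ≤ b := by rw [hb]; exact norm_nonneg (Ph x₀)
  have hc0 : 0 ≤ c := by rw [hc]; exact norm_nonneg Tt
  have hc_le1 : c ≤ 1 := by rw [hc]; exact hTt_le
  have hb_le : b ≤ 1 := by
    rw [hb]
    calc ‖Ph x₀‖ ≤ ‖x₀‖ := hPh_le x₀
      _ = 1 := hx₀
  have hTtPh_le_b : ‖Tt (Ph x₀)‖ ≤ b := by
    have h1 : ‖Tt (Ph x₀)‖ ≤ ‖Tt‖ * ‖Ph x₀‖ := Tt.le_opNorm _
    rw [← hb, ← hc] at h1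
    nlinarith
  have hb_half : 1 - 2*d ≤ b := le_trans hkey.le hTtPh_le_b
  have hb_pos : 0 < b := by linarith
  have hc_lb : 1 - 2*d < c := by
    have h1 : ‖Tt (Ph x₀)‖ ≤ ‖Tt‖ * ‖Ph x₀‖ := Tt.le_opNorm _
    rw [← hb, ← hc] at h1
    nlinarith [mul_nonneg hc0 (by linarith : (0:ℝ) ≤ 1 - b)]
  have hc_pos : 0 < c := by linarith
  -- normalized operator and point
  obtain ⟨T₁, hT₁⟩ : ∃ T₁ : ↥(LinearMap.range (P : X →ₗ[𝕜] X)) →L[𝕜] Y,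
      T₁ = ((c⁻¹ : ℝ) : 𝕜) • Tt := ⟨_, rfl⟩
  have hT₁c : IsCompactOperator T₁ := by rw [hT₁]; exact hTtc.smul _
  have hT₁app : ∀ z, T₁ z = ((c⁻¹ : ℝ) : 𝕜) • Tt z := by
    intro z; rw [hT₁, ContinuousLinearMap.smul_apply]
  have hT₁app_norm : ∀ z, ‖T₁ z‖ = c⁻¹ * ‖Tt z‖ := by
    intro z
    rw [hT₁app, norm_smul, RCLike.norm_ofReal, abs_of_nonneg (inv_nonneg.2 hc_pos.le)]
  have hTt_opn : ∀ z, ‖Tt z‖ ≤ c * ‖z‖ := by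
    intro z
    have := Tt.le_opNorm z
    rw [← hc] at this
    exact this
  have hT₁n : ‖T₁‖ = 1 := by
    have hle : ‖T₁‖ ≤ 1 := by
      refine ContinuousLinearMap.opNorm_le_bound _ zero_le_one fun z => ?_
      rw [hT₁app_norm, one_mul]
      calc c⁻¹ * ‖Tt z‖ ≤ c⁻¹ * (c * ‖z‖) :=
            mul_le_mul_of_nonneg_left (hTt_opn z) (inv_nonneg.2 hc0)
        _ = ‖z‖ := by rw [← mul_assoc, inv_mul_cancel₀ hc_pos.ne', one_mul]
    have hge : 1 ≤ ‖T₁‖ := by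
      have hTtle : ‖Tt‖ ≤ c * ‖T₁‖ := by
        refine ContinuousLinearMap.opNorm_le_bound _
          (mul_nonneg hc0 (norm_nonneg T₁)) fun z => ?_
        have e1 : ‖Tt z‖ = c * ‖T₁ z‖ := by
          rw [hT₁app_norm, ← mul_assoc, mul_inv_cancel₀ hc_pos.ne', one_mul]
        rw [e1, mul_assoc]
        exact mul_le_mul_of_nonneg_left (T₁.le_opNorm z) hc0
      rw [← hc] at hTtle
      nlinarith
    exact le_antisymm hle hge
  obtain ⟨u, hu⟩ : ∃ u : ↥(LinearMap.range (P : X →ₗ[𝕜] X)), u = ((b⁻¹ : ℝ) : 𝕜) • Ph x₀ := ⟨_, rfl⟩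
  have hu_n : ‖u‖ = 1 := by
    rw [hu, norm_smul, RCLike.norm_ofReal, abs_of_nonneg (inv_nonneg.2 hb_pos.le), ← hb,
      inv_mul_cancel₀ hb_pos.ne']
  have hcinv : 1 ≤ c⁻¹ := one_le_inv₀ hc_pos |>.2 <|  hc_le1
  have hbinv : 1 ≤ b⁻¹ := one_le_inv₀ hb_pos |>.2 <|  hb_le
  have hT₁u_ge : ‖Tt (Ph x₀)‖ ≤ ‖T₁ u‖ := by
    have e2 : ‖T₁ u‖ = c⁻¹ * (b⁻¹ * ‖Tt (Ph x₀)‖) := by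
      rw [hT₁app_norm, hu, _root_.map_smul, norm_smul, RCLike.norm_ofReal,
        abs_of_nonneg (inv_nonneg.2 hb_pos.le)]
    rw [e2]
    have h6 : 1 * ‖Tt (Ph x₀)‖ ≤ b⁻¹ * ‖Tt (Ph x₀)‖ :=
      mul_le_mul_of_nonneg_right hbinv (norm_nonneg _)
    have h7 : 1 * (b⁻¹ * ‖Tt (Ph x₀)‖) ≤ c⁻¹ * (b⁻¹ * ‖Tt (Ph x₀)‖) :=
      mul_le_mul_of_nonneg_right hcinv
        (mul_nonneg (inv_nonneg.2 hb0) (norm_nonneg _))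
    linarith
  have hT₁u : 1 - η (ε/3) < ‖T₁ u‖ := by
    have h5 : 1 - η (ε/3) ≤ 1 - 2*d := by linarith
    linarith [lt_of_lt_of_le hkey hT₁u_ge]
  -- apply BPBp on the subspace
  obtain ⟨hη3, hmain⟩ := hBPB (ε/3) hε3
  obtain ⟨St, ut, hStc, hStn, hutn, hStut, hdist_u, hdist_S⟩ :=
    hmain T₁ hT₁c hT₁n u hu_n hT₁u
  obtain ⟨S, hS⟩ : ∃ S : X →L[𝕜] Y, S = St.comp Ph := ⟨_, rfl⟩
  obtain ⟨x₁, hx₁def⟩ : ∃ x₁ : X, x₁ = i ut := ⟨_, rfl⟩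
  have hScomp : IsCompactOperator S := by rw [hS]; exact hStc.comp_clm Ph
  have hPhiut : Ph (i ut) = ut := Subtype.ext (hPi ut)
  have hSx₁ : S x₁ = St ut := by
    rw [hS, hx₁def, ContinuousLinearMap.comp_apply, hPhiut]
  have hx₁_le : ‖x₁‖ ≤ 1 := by
    rw [hx₁def]
    calc ‖i ut‖ ≤ ‖ut‖ := hi_le ut
      _ = 1 := hutn
  have hS_le : ‖S‖ ≤ 1 := by
    rw [hS]
    refine opNorm_le_of_unit zero_le_one ?_
    intro v hv
    show ‖St (Ph v)‖ ≤ 1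
    calc ‖St (Ph v)‖ ≤ ‖St‖ * ‖Ph v‖ := St.le_opNorm _
      _ ≤ 1 * 1 := mul_le_mul (le_of_eq hStn) ((hPh_le v).trans hv) (norm_nonneg _) zero_le_one
      _ = 1 := one_mul _
  have hSx₁n : ‖S x₁‖ = 1 := by rw [hSx₁, hStut]
  have hx₁n : ‖x₁‖ = 1 := by
    have h1 : (1:ℝ) ≤ ‖x₁‖ := by
      have h2 := S.le_opNorm x₁
      rw [hSx₁n] at h2
      have h3 : ‖S‖ * ‖x₁‖ ≤ 1 * ‖x₁‖ :=
        mul_le_mul_of_nonneg_right hS_le (norm_nonneg x₁)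
      linarith
    exact le_antisymm hx₁_le h1
  have hSn : ‖S‖ = 1 := by
    have h1 : (1:ℝ) ≤ ‖S‖ := by
      have h2 := S.le_opNorm x₁
      rw [hSx₁n, hx₁n, mul_one] at h2
      exact h2
    exact le_antisymm hS_le h1
  refine ⟨S, x₁, hScomp, hSn, hx₁n, hSx₁n, ?_, ?_⟩
  · -- ‖x₀ - x₁‖ < ε
    have t1 : ‖x₀ - i (Ph x₀)‖ < d := by rw [norm_sub_rev]; exact hiPx₀'
    have t2 : ‖i (Ph x₀) - i u‖ ≤ 1 - b := by
      rw [← map_sub]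
      refine le_trans (hi_le _) ?_
      have e : Ph x₀ - u = (((1 - b⁻¹ : ℝ)) : 𝕜) • Ph x₀ := by
        rw [hu, RCLike.ofReal_sub, RCLike.ofReal_one, sub_smul, one_smul]
      rw [e, norm_smul, RCLike.norm_ofReal, ← hb]
      have habs : |1 - b⁻¹| = b⁻¹ - 1 := by
        rw [abs_of_nonpos (by linarith)]; ring
      rw [habs]
      have heq : (b⁻¹ - 1) * b = 1 - b := by
        rw [sub_mul, inv_mul_cancel₀ hb_pos.ne', one_mul]
      linarith [le_of_eq heq]
    have t3 : ‖i u - i ut‖ < ε/3 := by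
      rw [← map_sub]
      exact lt_of_le_of_lt (hi_le _) hdist_u
    have decomp : x₀ - x₁ = (x₀ - i (Ph x₀)) + (i (Ph x₀) - i u) + (i u - i ut) := by
      rw [hx₁def]; abel
    calc ‖x₀ - x₁‖ = ‖(x₀ - i (Ph x₀)) + (i (Ph x₀) - i u) + (i u - i ut)‖ := by rw [decomp]
      _ ≤ ‖x₀ - i (Ph x₀)‖ + ‖i (Ph x₀) - i u‖ + ‖i u - i ut‖ := norm_add₃_le
      _ < d + (1 - b) + ε/3 := by linarith
      _ ≤ d + 2*d + ε/3 := by linarith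
      _ < ε := by linarith
  · -- ‖S - T‖ < ε
    have A1 : ‖(St - T₁).comp Ph‖ ≤ ‖St - T₁‖ := by
      refine ContinuousLinearMap.opNorm_le_bound _ (norm_nonneg _) fun x => ?_
      calc ‖((St - T₁).comp Ph) x‖ = ‖(St - T₁) (Ph x)‖ := rfl
        _ ≤ ‖St - T₁‖ * ‖Ph x‖ := (St - T₁).le_opNorm _
        _ ≤ ‖St - T₁‖ * ‖x‖ := mul_le_mul_of_nonneg_left (hPh_le x) (norm_nonneg _)
    have A2 : ‖(T₁ - Tt).comp Ph‖ ≤ 1 - c := by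
      refine ContinuousLinearMap.opNorm_le_bound _ (by linarith) fun x => ?_
      have e : ((T₁ - Tt).comp Ph) x = (((c⁻¹ - 1 : ℝ)) : 𝕜) • Tt (Ph x) := by
        rw [ContinuousLinearMap.comp_apply, ContinuousLinearMap.sub_apply, hT₁app,
          RCLike.ofReal_sub, RCLike.ofReal_one, sub_smul, one_smul]
      rw [e, norm_smul, RCLike.norm_ofReal,
        abs_of_nonneg (by linarith : (0:ℝ) ≤ c⁻¹ - 1)]
      calc (c⁻¹ - 1) * ‖Tt (Ph x)‖ ≤ (c⁻¹ - 1) * (c * ‖Ph x‖) :=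
            mul_le_mul_of_nonneg_left (hTt_opn (Ph x)) (by linarith)
        _ = (1 - c) * ‖Ph x‖ := by
            have hcc : c⁻¹ * c = 1 := inv_mul_cancel₀ hc_pos.ne'
            calc (c⁻¹ - 1) * (c * ‖Ph x‖) = (c⁻¹ * c) * ‖Ph x‖ - c * ‖Ph x‖ := by ring
              _ = (1 - c) * ‖Ph x‖ := by rw [hcc]; ring
        _ ≤ (1 - c) * ‖x‖ := mul_le_mul_of_nonneg_left (hPh_le x) (by linarith)
    have A3 : ‖Tt.comp Ph - T‖ ≤ 4 * d := by
      refine ContinuousLinearMap.opNorm_le_bound _ (by positivity) fun x => ?_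
      have e : (Tt.comp Ph - T) x = T (i (Ph x)) - T x := by
        rw [ContinuousLinearMap.sub_apply, ContinuousLinearMap.comp_apply, hTt,
          ContinuousLinearMap.comp_apply]
      rw [e]
      exact claim1 x
    have decomp : S - T = (St - T₁).comp Ph + (T₁ - Tt).comp Ph + (Tt.comp Ph - T) := by
      rw [hS]
      ext x
      simp only [ContinuousLinearMap.sub_apply, ContinuousLinearMap.add_apply,
        ContinuousLinearMap.comp_apply]
      abel
    calc ‖S - T‖ = ‖(St - T₁).comp Ph + (T₁ - Tt).comp Ph + (Tt.comp Ph - T)‖ := by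
          rw [decomp]
      _ ≤ ‖(St - T₁).comp Ph‖ + ‖(T₁ - Tt).comp Ph‖ + ‖Tt.comp Ph - T‖ := norm_add₃_le
      _ < ε/3 + (1 - c) + 4*d := by
          have hA1' : ‖(St - T₁).comp Ph‖ < ε/3 := lt_of_le_of_lt A1 hdist_S
          exact add_lt_add_of_lt_of_le (add_lt_add_of_lt_of_le hA1' A2) A3
      _ < ε/3 + 2*d + 4*d := by linarith
      _ ≤ ε := by linarith
end
end

section
/- Let X be a Banach space for which there exist a nonempty directed preordered set Λ and a net (P_α)_{α∈Λ} of norm-one projections on X such that ‖P_α x − x‖ → 0 along Λ for every x ∈ X, and ‖P_α* x* − x*‖ → 0 along Λ for every x* ∈ X*. If for a Banach space Y there exists a function η : (0,∞) → (0,∞) such that all the pairs (P_α(X), Y), α ∈ Λ, have the BPBp for compact operators with the function η (where P_α(X) is the range of P_α with the norm inherited from X), then the pair (X, Y) has the BPBp for compact operators. -/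
open MeasureTheory

noncomputable section

section AuxiliaryLemmas

open Metric NormedSpace Set

variable {𝕜 : Type*} [RCLike 𝕜] {E F : Type*} [NormedAddCommGroup E] [NormedSpace 𝕜 E]
  [NormedAddCommGroup F] [NormedSpace 𝕜 F]

theorem myOpNorm_le_of_unit {f : E →L[𝕜] F} {M : ℝ} (hM : 0 ≤ M)
    (h : ∀ x : E, ‖x‖ ≤ 1 → ‖f x‖ ≤ M) : ‖f‖ ≤ M := by
  refine f.opNorm_le_bound hM fun x => ?_
  rcases eq_or_ne x 0 with rfl | hx
  · simp [hM]
  · have hxp : 0 < ‖x‖ := norm_pos_iff.2 hx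
    have hc : ‖((‖x‖ : 𝕜))⁻¹ • x‖ ≤ 1 := by
      rw [norm_smul, norm_inv, RCLike.norm_ofReal, abs_of_pos hxp, inv_mul_cancel₀ hxp.ne']
    have h2 := h _ hc
    rw [_root_.map_smul, norm_smul, norm_inv, RCLike.norm_ofReal, abs_of_pos hxp] at h2
    calc ‖f x‖ = ‖x‖ * (‖x‖⁻¹ * ‖f x‖) := by field_simp
    _ ≤ ‖x‖ * M := mul_le_mul_of_nonneg_left h2 hxp.le
    _ = M * ‖x‖ := mul_comm _ _


/-- Schauder-type lemma: the image of the dual unit ball under the adjoint of a compact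
operator is totally bounded. -/
theorem totallyBounded_adjoint_image {T : E →L[𝕜] F} (hT : IsCompactOperator T) :
    TotallyBounded {x' : StrongDual 𝕜 E | ∃ y' : StrongDual 𝕜 F, ‖y'‖ ≤ 1 ∧ x' = y'.comp T} := by
  rw [Metric.totallyBounded_iff]
  intro ε hε
  have hT' : IsCompactOperator ⇑(T : E →ₗ[𝕜] F) := by rwa [ContinuousLinearMap.coe_coe]
  have hK : IsCompact (closure (⇑T '' closedBall 0 1)) := by
    have := hT'.isCompact_closure_image_of_bounded (isBounded_closedBall (x := (0:E)) (r := 1))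
    rwa [ContinuousLinearMap.coe_coe] at this
  obtain ⟨s, hsfin, hsub⟩ := Metric.totallyBounded_iff.1 hK.totallyBounded (ε/8) (by positivity)
  haveI := hsfin.fintype
  set G : StrongDual 𝕜 F → (↥s → 𝕜) := fun y' (z : ↥s) => y' z with hG
  obtain ⟨R, hR⟩ : ∃ R, ∀ z ∈ s, ‖z‖ ≤ R := by
    obtain ⟨R, hR⟩ := (hsfin.image norm).bddAbove
    exact ⟨R, fun z hz => hR ⟨z, hz, rfl⟩⟩
  have hDsub : G '' closedBall 0 1 ⊆ closedBall 0 (max R 0) := by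
    rintro _ ⟨y', hy', rfl⟩
    rw [mem_closedBall_zero_iff] at hy' ⊢
    refine (pi_norm_le_iff_of_nonneg (le_max_right _ _)).2 fun z => ?_
    calc ‖y' (z : F)‖ ≤ ‖y'‖ * ‖(z : F)‖ := y'.le_opNorm _
    _ ≤ 1 * (max R 0) := by
        exact mul_le_mul hy' ((hR z z.2).trans (le_max_left _ _)) (norm_nonneg _) zero_le_one
    _ = max R 0 := one_mul _
  have hDtb : TotallyBounded (G '' closedBall 0 1) :=
    (isCompact_closedBall (0 : ↥s → 𝕜) (max R 0)).totallyBounded.subset hDsub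
  obtain ⟨t, hts, htfin, htsub⟩ := finite_approx_of_totallyBounded hDtb (ε/2) (by positivity)
  haveI := htfin.to_subtype
  have hchoice : ∀ c : ↥t, ∃ y' : StrongDual 𝕜 F, ‖y'‖ ≤ 1 ∧ G y' = c := by
    intro c
    obtain ⟨y', hy', hGy'⟩ := hts c.2
    exact ⟨y', mem_closedBall_zero_iff.1 hy', hGy'⟩
  choose f hf1 hf2 using hchoice
  refine ⟨Set.range (fun c : ↥t => (f c).comp T), Set.finite_range _, ?_⟩
  rintro x' ⟨y', hy'le, rfl⟩
  have hGy' : G y' ∈ ⋃ c ∈ t, ball c (ε/2) :=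
    htsub ⟨y', mem_closedBall_zero_iff.2 hy'le, rfl⟩
  obtain ⟨c, hct, hc⟩ := Set.mem_iUnion₂.1 hGy'
  refine Set.mem_iUnion₂.2 ⟨(f ⟨c, hct⟩).comp T, Set.mem_range_self _, ?_⟩
  rw [mem_ball, dist_eq_norm]
  set y'' := f ⟨c, hct⟩ with hy''
  have hy''le : ‖y''‖ ≤ 1 := hf1 _
  have key : ‖y'.comp T - y''.comp T‖ ≤ ε/8 + ε/2 + ε/8 := by
    refine myOpNorm_le_of_unit (by positivity) fun x hx => ?_
    have hTx : T x ∈ ⋃ z ∈ s, ball z (ε/8) :=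
      hsub (subset_closure ⟨x, mem_closedBall_zero_iff.2 hx, rfl⟩)
    obtain ⟨z, hzs, hz⟩ := Set.mem_iUnion₂.1 hTx
    rw [mem_ball, dist_eq_norm] at hz
    have e0 : (y'.comp T - y''.comp T) x = y' (T x) - y'' (T x) := by
      simp [ContinuousLinearMap.sub_apply]
    rw [e0]
    have e1 : y' (T x) - y'' (T x) =
        (y' (T x) - y' z) + (y' z - y'' z) + (y'' z - y'' (T x)) := by ring
    rw [e1]
    have b1 : ‖y' (T x) - y' z‖ ≤ ε/8 := by
      rw [← _root_.map_sub]
      calc ‖y' (T x - z)‖ ≤ ‖y'‖ * ‖T x - z‖ := y'.le_opNorm _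
      _ ≤ 1 * (ε/8) := mul_le_mul hy'le hz.le (norm_nonneg _) zero_le_one
      _ = ε/8 := one_mul _
    have b3 : ‖y'' z - y'' (T x)‖ ≤ ε/8 := by
      rw [← _root_.map_sub]
      calc ‖y'' (z - T x)‖ ≤ ‖y''‖ * ‖z - T x‖ := y''.le_opNorm _
      _ ≤ 1 * (ε/8) := by
          rw [norm_sub_rev]
          exact mul_le_mul hy''le hz.le (norm_nonneg _) zero_le_one
      _ = ε/8 := one_mul _
    have b2 : ‖y' z - y'' z‖ ≤ ε/2 := by
      have hdist : dist (G y') (G y'') < ε/2 := by rwa [hf2 ⟨c, hct⟩]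
      have : ‖(G y' - G y'') ⟨z, hzs⟩‖ ≤ ‖G y' - G y''‖ := norm_le_pi_norm _ _
      rw [← dist_eq_norm] at this ⊢
      calc dist (y' z) (y'' z) = dist ((G y') ⟨z, hzs⟩) ((G y'') ⟨z, hzs⟩) := rfl
      _ ≤ dist (G y') (G y'') := dist_le_pi_dist _ _ _
      _ ≤ ε/2 := hdist.le
    calc ‖(y' (T x) - y' z) + (y' z - y'' z) + (y'' z - y'' (T x))‖
        ≤ ‖y' (T x) - y' z‖ + ‖y' z - y'' z‖ + ‖y'' z - y'' (T x)‖ := norm_add₃_le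
    _ ≤ ε/8 + ε/2 + ε/8 := by linarith
  calc ‖y'.comp T - y''.comp T‖ ≤ ε/8 + ε/2 + ε/8 := key
  _ < ε := by linarith

theorem clm_norm_smul (c : 𝕜) (f : E →L[𝕜] F) : ‖c • f‖ = ‖c‖ * ‖f‖ := norm_smul c f

theorem exists_uniform_small {Λ : Type*} [Preorder Λ] [IsDirected Λ (· ≤ ·)] [Nonempty Λ]
    (P : Λ → E →L[𝕜] E) (hnorm : ∀ α, ‖P α‖ = 1)
    (hconv' : ∀ x' : StrongDual 𝕜 E, ∀ ε : ℝ, 0 < ε →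
      ∃ α₀ : Λ, ∀ α, α₀ ≤ α → ‖x'.comp (P α) - x'‖ < ε)
    {T : E →L[𝕜] F} (hT : IsCompactOperator T) {δ : ℝ} (hδ : 0 < δ) :
    ∃ α₀ : Λ, ∀ α, α₀ ≤ α → ‖T.comp (P α) - T‖ < δ := by
  classical
  obtain ⟨t, htA, htfin, htsub⟩ :=
    finite_approx_of_totallyBounded (totallyBounded_adjoint_image hT) (δ/4) (by positivity)
  have hchoice : ∀ x'' : StrongDual 𝕜 E, ∃ α₀ : Λ, ∀ α, α₀ ≤ α →
      ‖x''.comp (P α) - x''‖ < δ/4 := fun x'' => hconv' x'' _ (by positivity)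
  choose g hg using hchoice
  obtain ⟨α₀, hα₀⟩ := (htfin.toFinset.image g).exists_le
  refine ⟨α₀, fun α hα => ?_⟩
  have hb : ∀ x'' ∈ t, ‖x''.comp (P α) - x''‖ < δ/4 := fun x'' hx'' =>
    hg x'' α (le_trans (hα₀ _ (Finset.mem_image_of_mem g (htfin.mem_toFinset.2 hx''))) hα)
  have hmain : ‖T.comp (P α) - T‖ ≤ 3 * (δ/4) := by
    refine myOpNorm_le_of_unit (by positivity) fun x hx => ?_
    by_cases hv : (T.comp (P α) - T) x = 0
    · rw [hv, norm_zero]; positivity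
    · obtain ⟨g', hg'n, hg'v⟩ := exists_dual_vector 𝕜 _ (norm_ne_zero_iff.2 hv)
      have hx'A : (g'.comp T) ∈ {x' : StrongDual 𝕜 E | ∃ y' : StrongDual 𝕜 F, ‖y'‖ ≤ 1 ∧ x' = y'.comp T} :=
        ⟨g', hg'n.le, rfl⟩
      obtain ⟨x'', hx''t, hx''⟩ := Set.mem_iUnion₂.1 (htsub hx'A)
      rw [mem_ball, dist_eq_norm] at hx''
      have e1 : ‖(T.comp (P α) - T) x‖ = ‖g' ((T.comp (P α) - T) x)‖ := by
        rw [hg'v, RCLike.norm_ofReal, abs_of_nonneg (norm_nonneg _)]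
      have e2 : g' ((T.comp (P α) - T) x) = ((g'.comp T).comp (P α) - g'.comp T) x := by
        simp [ContinuousLinearMap.sub_apply, _root_.map_sub]
      have e3 : (g'.comp T).comp (P α) - g'.comp T =
          ((g'.comp T - x'').comp (P α)) + (x''.comp (P α) - x'') + (x'' - g'.comp T) := by
        rw [ContinuousLinearMap.sub_comp]; abel
      have b1 : ‖(g'.comp T - x'').comp (P α)‖ ≤ δ/4 := by
        calc ‖(g'.comp T - x'').comp (P α)‖ ≤ ‖g'.comp T - x''‖ * ‖P α‖ :=
            ContinuousLinearMap.opNorm_comp_le _ _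
        _ = ‖g'.comp T - x''‖ := by rw [hnorm, mul_one]
        _ ≤ δ/4 := hx''.le
      have b2 : ‖x''.comp (P α) - x''‖ ≤ δ/4 := (hb x'' hx''t).le
      have b3 : ‖x'' - g'.comp T‖ ≤ δ/4 := by rw [norm_sub_rev]; exact hx''.le
      calc ‖(T.comp (P α) - T) x‖ = ‖((g'.comp T).comp (P α) - g'.comp T) x‖ := by
            rw [e1, e2]
      _ ≤ ‖(g'.comp T).comp (P α) - g'.comp T‖ * ‖x‖ := ContinuousLinearMap.le_opNorm _ _
      _ ≤ ‖(g'.comp T).comp (P α) - g'.comp T‖ * 1 :=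
          mul_le_mul_of_nonneg_left hx (norm_nonneg _)
      _ = ‖(g'.comp T).comp (P α) - g'.comp T‖ := mul_one _
      _ ≤ ‖(g'.comp T - x'').comp (P α)‖ + ‖x''.comp (P α) - x''‖ + ‖x'' - g'.comp T‖ := by
          rw [e3]; exact norm_add₃_le
      _ ≤ 3 * (δ/4) := by linarith
  linarith

end AuxiliaryLemmas

set_option maxHeartbeats 1000000 in
/-- Proposition 2.2: a net of norm-one projections converging pointwise to the identity,
whose adjoints converge pointwise to the identity as well, transfers the BPBp for compact
operators from the ranges to the whole space. -/
theorem bpbp_compact_of_net_of_projections {𝕜 : Type*} [RCLike 𝕜] {X Y : Type*}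
    [NormedAddCommGroup X] [NormedSpace 𝕜 X] [CompleteSpace X]
    [NormedAddCommGroup Y] [NormedSpace 𝕜 Y] [CompleteSpace Y]
    {Λ : Type*} [Preorder Λ] [IsDirected Λ (· ≤ ·)] [Nonempty Λ]
    (P : Λ → X →L[𝕜] X)
    (hproj : ∀ α, ∀ x : X, P α (P α x) = P α x)
    (hnorm : ∀ α, ‖P α‖ = 1)
    (hconv : ∀ x : X, ∀ ε : ℝ, 0 < ε → ∃ α₀ : Λ, ∀ α, α₀ ≤ α → ‖P α x - x‖ < ε)
    (hconv' : ∀ x' : StrongDual 𝕜 X, ∀ ε : ℝ, 0 < ε →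
      ∃ α₀ : Λ, ∀ α, α₀ ≤ α → ‖x'.comp (P α) - x'‖ < ε)
    (η : ℝ → ℝ)
    (hBPB : ∀ α, BPBpCompactWith 𝕜 (↥(LinearMap.range (P α : X →ₗ[𝕜] X))) Y η) :
    BPBpCompact 𝕜 X Y := by
  classical
  refine ⟨fun e => if he : 0 < e then min (η (min e 1 / 6) / 2) (min e 1 / 6) else 1,
    fun ε hε => ?_⟩
  have hε₁pos : 0 < min ε 1 := lt_min hε one_pos
  have hε₁le : min ε 1 ≤ ε := min_le_left _ _
  have hε₁le1 : min ε 1 ≤ 1 := min_le_right _ _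
  set ε' := min ε 1 / 6 with hε'def
  have hε'pos : 0 < ε' := by positivity
  have hη : 0 < η ε' := (hBPB (Classical.arbitrary Λ) ε' hε'pos).1
  set θ := min (η ε' / 2) ε' with hθdef
  have hθpos : 0 < θ := lt_min (by positivity) hε'pos
  have hθε' : θ ≤ ε' := min_le_right _ _
  have h2θ : 2 * θ ≤ η ε' := by
    have := min_le_left (η ε' / 2) ε'
    have : θ ≤ η ε' / 2 := this
    linarith
  have hθ6 : θ ≤ 1/6 := hθε'.trans (by linarith)
  have hifeq : (if _ : 0 < ε then min (η (min ε 1 / 6) / 2) (min ε 1 / 6) else 1) = θ := by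
    rw [dif_pos hε]
  beta_reduce
  rw [hifeq]
  refine ⟨hθpos, ?_⟩
  intro T hTc hTn x₀ hx₀ hTx₀
  obtain ⟨α₁, hα₁⟩ := hconv x₀ θ hθpos
  obtain ⟨α₂, hα₂⟩ := exists_uniform_small P hnorm hconv' hTc hθpos
  obtain ⟨α, hαa, hαb⟩ := exists_ge_ge α₁ α₂
  have hPx₀ : ‖P α x₀ - x₀‖ < θ := hα₁ α hαa
  have hTP : ‖T.comp (P α) - T‖ < θ := hα₂ α hαb
  set Z := LinearMap.range (P α : X →ₗ[𝕜] X) with hZ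
  set ι : ↥Z →L[𝕜] X := Z.subtypeL with hι
  set Q : X →L[𝕜] ↥Z := (P α).codRestrict Z (fun x => ⟨x, rfl⟩) with hQdef
  have hQ : ∀ x, ‖Q x‖ = ‖P α x‖ := fun x => rfl
  have hQle : ∀ x, ‖Q x‖ ≤ ‖x‖ := fun x => by
    rw [hQ]
    calc ‖P α x‖ ≤ ‖P α‖ * ‖x‖ := (P α).le_opNorm x
    _ = ‖x‖ := by rw [hnorm, one_mul]
  have hQn : ‖Q‖ ≤ 1 := myOpNorm_le_of_unit zero_le_one fun x hx => (hQle x).trans hx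
  set u₀ : ↥Z := Q x₀ with hu₀def
  have hu₀n : ‖u₀‖ = ‖P α x₀‖ := rfl
  have hu₀le : ‖u₀‖ ≤ 1 := by
    rw [hu₀n]
    calc ‖P α x₀‖ ≤ ‖P α‖ * ‖x₀‖ := (P α).le_opNorm x₀
    _ = 1 := by rw [hnorm, hx₀, one_mul]
  have hu₀gt : 1 - θ < ‖u₀‖ := by
    have h1 : ‖x₀‖ - ‖P α x₀‖ ≤ ‖P α x₀ - x₀‖ := by
      rw [norm_sub_rev]; exact norm_sub_norm_le _ _
    rw [hu₀n]; rw [hx₀] at h1; linarith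
  have hu₀pos : 0 < ‖u₀‖ := by linarith
  set T₁ : ↥Z →L[𝕜] Y := T.comp ι with hT₁def
  have hιz : ∀ z : ↥Z, ‖ι z‖ = ‖z‖ := fun z => rfl
  have hT₁le : ‖T₁‖ ≤ 1 := myOpNorm_le_of_unit zero_le_one fun z hz => by
    calc ‖T₁ z‖ = ‖T (ι z)‖ := rfl
    _ ≤ ‖T‖ * ‖ι z‖ := T.le_opNorm _
    _ ≤ 1 := by rw [hTn, one_mul, hιz]; exact hz
  have hT₁u₀gt : 1 - 2*θ < ‖T₁ u₀‖ := by
    have h1 : T₁ u₀ = T (P α x₀) := rfl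
    have h2 : ‖T (P α x₀) - T x₀‖ ≤ θ := by
      have h3 := (T.comp (P α) - T).le_opNorm x₀
      rw [hx₀, mul_one] at h3
      have h4 : (T.comp (P α) - T) x₀ = T (P α x₀) - T x₀ := by
        simp [ContinuousLinearMap.sub_apply]
      rw [h4] at h3
      linarith
    have h5 : ‖T x₀‖ - ‖T (P α x₀)‖ ≤ ‖T (P α x₀) - T x₀‖ := by
      rw [norm_sub_rev]; exact norm_sub_norm_le _ _
    rw [h1]; linarith
  have hT₁mul : ‖T₁ u₀‖ ≤ ‖T₁‖ * ‖u₀‖ := T₁.le_opNorm _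
  have hT₁nn : (0:ℝ) ≤ ‖T₁‖ := ContinuousLinearMap.opNorm_nonneg _
  have hT₁ge : 1 - 2*θ < ‖T₁‖ := by
    have h7 : ‖T₁‖ * ‖u₀‖ ≤ ‖T₁‖ * 1 := mul_le_mul_of_nonneg_left hu₀le hT₁nn
    rw [mul_one] at h7
    linarith
  have hT₁pos : 0 < ‖T₁‖ := by linarith
  set a : 𝕜 := ((‖T₁‖ : ℝ) : 𝕜) with hadef
  have ha : ‖a‖ = ‖T₁‖ := by rw [hadef, RCLike.norm_ofReal, abs_of_pos hT₁pos]
  have ha0 : a ≠ 0 := by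
    simp only [hadef, ne_eq, RCLike.ofReal_eq_zero]; exact hT₁pos.ne'
  set T₂ : ↥Z →L[𝕜] Y := a⁻¹ • T₁ with hT₂def
  have hT₂n : ‖T₂‖ = 1 := by
    have h : ‖T₂‖ = ‖a⁻¹‖ * ‖T₁‖ := clm_norm_smul a⁻¹ T₁
    rw [h, norm_inv, ha, inv_mul_cancel₀ hT₁pos.ne']
  have hT₁c : IsCompactOperator T₁ := by
    have := hTc.comp_clm ι
    exact this
  have hT₂c : IsCompactOperator T₂ := by
    have h := hT₁c.smul a⁻¹
    have : ⇑T₂ = a⁻¹ • ⇑T₁ := rfl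
    rwa [this]
  set b : 𝕜 := ((‖u₀‖ : ℝ) : 𝕜) with hbdef
  have hb : ‖b‖ = ‖u₀‖ := by rw [hbdef, RCLike.norm_ofReal, abs_of_pos hu₀pos]
  set u₁ : ↥Z := b⁻¹ • u₀ with hu₁def
  have hu₁ : ‖u₁‖ = 1 := by
    rw [hu₁def, norm_smul, norm_inv, hb, inv_mul_cancel₀ hu₀pos.ne']
  have hT₂u₁gt : 1 - η ε' < ‖T₂ u₁‖ := by
    have e : T₂ u₁ = (a⁻¹ * b⁻¹) • (T₁ u₀) := by
      rw [hT₂def, hu₁def]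
      simp [smul_smul, _root_.map_smul, mul_comm]
    have en : ‖T₂ u₁‖ = ‖T₁‖⁻¹ * ‖u₀‖⁻¹ * ‖T₁ u₀‖ := by
      rw [e, norm_smul, norm_mul, norm_inv, norm_inv, ha, hb]
    have i1 : 1 ≤ ‖T₁‖⁻¹ := (one_le_inv₀ hT₁pos).2 hT₁le
    have i2 : 1 ≤ ‖u₀‖⁻¹ := (one_le_inv₀ hu₀pos).2 hu₀le
    have h1 : 1 * ‖T₁ u₀‖ ≤ ‖u₀‖⁻¹ * ‖T₁ u₀‖ := mul_le_mul_of_nonneg_right i2 (norm_nonneg _)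
    have h2 : ‖u₀‖⁻¹ * ‖T₁ u₀‖ ≤ ‖T₁‖⁻¹ * (‖u₀‖⁻¹ * ‖T₁ u₀‖) :=
      le_mul_of_one_le_left (by positivity) i1
    rw [en, mul_assoc]
    rw [one_mul] at h1
    linarith
  obtain ⟨S₂, v, hS₂c, hS₂n, hvn, hS₂v, hvu, hST⟩ :=
    (hBPB α ε' hε'pos).2 T₂ hT₂c hT₂n u₁ hu₁ hT₂u₁gt
  set S : X →L[𝕜] Y := S₂.comp Q with hSdef
  set x₁ : X := (v : X) with hx₁def
  have hx₁n : ‖x₁‖ = 1 := hvn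
  have hQx₁ : Q x₁ = v := by
    obtain ⟨w, hw⟩ := v.2
    have h1 : P α (v : X) = (v : X) := by
      rw [← hw]
      exact hproj α w
    exact Subtype.ext h1
  have hSx₁ : S x₁ = S₂ v := by
    rw [hSdef, ContinuousLinearMap.comp_apply, hQx₁]
  have hSx₁n : ‖S x₁‖ = 1 := by rw [hSx₁, hS₂v]
  have hSle : ‖S‖ ≤ 1 := myOpNorm_le_of_unit zero_le_one fun x hx => by
    calc ‖S x‖ = ‖S₂ (Q x)‖ := by rw [hSdef, ContinuousLinearMap.comp_apply]
    _ ≤ ‖S₂‖ * ‖Q x‖ := S₂.le_opNorm _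
    _ ≤ 1 := by rw [hS₂n, one_mul]; exact (hQle x).trans hx
  have hSn : ‖S‖ = 1 := by
    refine le_antisymm hSle ?_
    have := S.le_opNorm x₁
    rw [hSx₁n, hx₁n, mul_one] at this
    exact this
  have hSc : IsCompactOperator S := hS₂c.comp_clm Q
  refine ⟨S, x₁, hSc, hSn, hx₁n, hSx₁n, ?_, ?_⟩
  · -- ‖x₀ - x₁‖ < ε
    have e1 : ‖u₀ - u₁‖ = 1 - ‖u₀‖ := by
      have e2 : u₀ - u₁ = ((1:𝕜) - b⁻¹) • u₀ := by
        rw [hu₁def, sub_smul, one_smul]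
      have e3 : (1 : 𝕜) - b⁻¹ = ((1 - ‖u₀‖⁻¹ : ℝ) : 𝕜) := by
        rw [hbdef]
        push_cast
        ring
      have e4 : ‖(1:𝕜) - b⁻¹‖ = ‖u₀‖⁻¹ - 1 := by
        rw [e3, RCLike.norm_ofReal, abs_of_nonpos (by
          have : 1 ≤ ‖u₀‖⁻¹ := (one_le_inv₀ hu₀pos).2 hu₀le
          linarith)]
        ring
      rw [e2, norm_smul, e4, sub_mul, inv_mul_cancel₀ hu₀pos.ne', one_mul]
    have hsum : x₀ - x₁ = (x₀ - (u₀ : X)) + ((u₀ : X) - (u₁ : X)) + ((u₁ : X) - x₁) := by abel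
    have hcu₀ : (u₀ : X) = P α x₀ := rfl
    have t1 : ‖x₀ - (u₀ : X)‖ < θ := by rw [hcu₀, norm_sub_rev]; exact hPx₀
    have t2 : ‖(u₀ : X) - (u₁ : X)‖ < θ := by
      have hc : (u₀ : X) - (u₁ : X) = ((u₀ - u₁ : ↥Z) : X) := rfl
      have hn : ‖((u₀ - u₁ : ↥Z) : X)‖ = ‖u₀ - u₁‖ := rfl
      rw [hc, hn, e1]
      linarith
    have t3 : ‖(u₁ : X) - x₁‖ < ε' := by
      have : (u₁ : X) - x₁ = ((u₁ - v : ↥Z) : X) := by simp [hx₁def]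
      rw [this]
      exact lt_of_le_of_lt (le_of_eq rfl) hvu
    calc ‖x₀ - x₁‖ ≤ ‖x₀ - (u₀:X)‖ + ‖(u₀:X) - (u₁:X)‖ + ‖(u₁:X) - x₁‖ := by
          rw [hsum]; exact norm_add₃_le
    _ < θ + θ + ε' := by linarith
    _ ≤ ε' + ε' + ε' := by linarith
    _ < ε := by rw [hε'def]; linarith
  · -- ‖S - T‖ < ε
    have hTQ : T₁.comp Q = T.comp (P α) := by
      ext x; rfl
    have key : S - T = (S₂ - T₂).comp Q + (T₂ - T₁).comp Q + (T₁.comp Q - T) := by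
      rw [ContinuousLinearMap.sub_comp, ContinuousLinearMap.sub_comp]
      abel
    have b1 : ‖(S₂ - T₂).comp Q‖ < ε' := by
      calc ‖(S₂ - T₂).comp Q‖ ≤ ‖S₂ - T₂‖ * ‖Q‖ := ContinuousLinearMap.opNorm_comp_le _ _
      _ ≤ ‖S₂ - T₂‖ := mul_le_of_le_one_right (ContinuousLinearMap.opNorm_nonneg _) hQn
      _ < ε' := hST
    have b2 : ‖(T₂ - T₁).comp Q‖ < 2*θ := by
      have e : T₂ - T₁ = (a⁻¹ - 1) • T₁ := by
        ext z
        simp [hT₂def, ContinuousLinearMap.smul_apply, sub_smul, one_smul]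
      have ea : ‖a⁻¹ - (1:𝕜)‖ = ‖T₁‖⁻¹ - 1 := by
        have : a⁻¹ - (1:𝕜) = ((‖T₁‖⁻¹ - 1 : ℝ) : 𝕜) := by
          rw [hadef]; push_cast; ring
        rw [this, RCLike.norm_ofReal, abs_of_nonneg (by
          have : 1 ≤ ‖T₁‖⁻¹ := (one_le_inv₀ hT₁pos).2 hT₁le
          linarith)]
      have en : ‖T₂ - T₁‖ = 1 - ‖T₁‖ := by
        have h : ‖T₂ - T₁‖ = ‖a⁻¹ - 1‖ * ‖T₁‖ := by rw [e]; exact clm_norm_smul _ T₁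
        rw [h, ea]
        field_simp
      calc ‖(T₂ - T₁).comp Q‖ ≤ ‖T₂ - T₁‖ * ‖Q‖ := ContinuousLinearMap.opNorm_comp_le _ _
      _ ≤ ‖T₂ - T₁‖ := mul_le_of_le_one_right (ContinuousLinearMap.opNorm_nonneg _) hQn
      _ = 1 - ‖T₁‖ := en
      _ < 2*θ := by linarith
    have b3 : ‖T₁.comp Q - T‖ < θ := by rw [hTQ]; exact hTP
    calc ‖S - T‖ ≤ ‖(S₂ - T₂).comp Q‖ + ‖(T₂ - T₁).comp Q‖ + ‖T₁.comp Q - T‖ := by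
          rw [key]; exact norm_add₃_le
    _ < ε' + 2*θ + θ := by linarith
    _ ≤ ε' + 2*ε' + ε' := by linarith
    _ < ε := by rw [hε'def]; linarith
end
end

section
/- Let X be a Banach space, let Λ be a nonempty directed preordered set, and let (P_α)_{α∈Λ} be a net of norm-one projections on X such that α ≤ β implies P_α(X) ⊆ P_β(X), and such that ‖P_α* x* − x*‖ → 0 along Λ for every x* ∈ X*. If for a Banach space Y there exists a function η : (0,∞) → (0,∞) such that all the pairs (P_α(X), Y), α ∈ Λ, have the BPBp for compact operators with the function η (where P_α(X) is the range of P_α with the norm inherited from X), then the pair (X, Y) has the BPBp for compact operators. -/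
set_option maxHeartbeats 1000000

open MeasureTheory

noncomputable section

section BPBHelpers

open Metric Set

variable {𝕜 : Type*} [RCLike 𝕜] {X Y : Type*}
  [NormedAddCommGroup X] [NormedSpace 𝕜 X]
  [NormedAddCommGroup Y] [NormedSpace 𝕜 Y]

lemma BPB.opnorm_le_of_unit (A : X →L[𝕜] Y) {c : ℝ} (hc : 0 ≤ c)
    (h : ∀ x : X, ‖x‖ ≤ 1 → ‖A x‖ ≤ c) : ‖A‖ ≤ c := by
  refine A.opNorm_le_bound hc fun x => ?_
  rcases eq_or_ne x 0 with rfl | hx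
  · simp
  · have hn : 0 < ‖x‖ := norm_pos_iff.2 hx
    have h2 := h (((‖x‖⁻¹ : ℝ) : 𝕜) • x) ?_
    · rw [_root_.map_smul, norm_smul, RCLike.norm_ofReal, abs_of_nonneg (inv_nonneg.2 hn.le)] at h2
      have h3 : ‖x‖⁻¹ * ‖A x‖ ≤ c := h2
      calc ‖A x‖ = ‖x‖ * (‖x‖⁻¹ * ‖A x‖) := by field_simp
      _ ≤ ‖x‖ * c := by exact mul_le_mul_of_nonneg_left h3 hn.le
      _ = c * ‖x‖ := mul_comm _ _
    · rw [norm_smul, RCLike.norm_ofReal, abs_of_nonneg (inv_nonneg.2 hn.le),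
        inv_mul_cancel₀ hn.ne']

lemma BPB.dual_net (T : X →L[𝕜] Y) (hT : IsCompactOperator T) {r : ℝ} (hr : 0 < r) :
    ∃ F : Set (Y →L[𝕜] 𝕜), F.Finite ∧ (∀ f ∈ F, ‖f‖ ≤ 1) ∧
      ∀ g : Y →L[𝕜] 𝕜, ‖g‖ ≤ 1 → ∃ f ∈ F, ‖g.comp T - f.comp T‖ ≤ 3 * r := by
  classical
  obtain ⟨K, hK, hKT⟩ :=
    IsCompactOperator.image_closedBall_subset_compact (f := (T : X →ₗ[𝕜] Y)) hT 1
  obtain ⟨t, htfin, htK⟩ := (Metric.totallyBounded_iff).1 hK.totallyBounded r hr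
  haveI : Fintype ↥t := htfin.fintype
  set Φ : (Y →L[𝕜] 𝕜) → (↥t → 𝕜) := fun g k => g k with hΦ
  set C : ℝ := ((Finset.univ.sup fun k : ↥t => ‖(k : Y)‖₊ : NNReal) : ℝ) with hC
  have hCnn : 0 ≤ C := NNReal.coe_nonneg _
  have hSb : ∀ g : Y →L[𝕜] 𝕜, ‖g‖ ≤ 1 → Φ g ∈ Metric.closedBall (0 : ↥t → 𝕜) C := by
    intro g hg
    rw [mem_closedBall_zero_iff]
    refine pi_norm_le_iff_of_nonneg hCnn |>.2 fun k => ?_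
    calc ‖g (k : Y)‖ ≤ ‖g‖ * ‖(k : Y)‖ := g.le_opNorm _
    _ ≤ 1 * ‖(k : Y)‖ := by
        exact mul_le_mul_of_nonneg_right hg (norm_nonneg _)
    _ = ‖(k : Y)‖ := one_mul _
    _ ≤ C := by
        rw [hC]
        exact_mod_cast Finset.le_sup (f := fun k : ↥t => ‖(k : Y)‖₊) (Finset.mem_univ k)
  have hTB : TotallyBounded (Φ '' {g : Y →L[𝕜] 𝕜 | ‖g‖ ≤ 1}) := by
    refine TotallyBounded.subset ?_ (isCompact_closedBall (0 : ↥t → 𝕜) C).totallyBounded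
    rintro _ ⟨g, hg, rfl⟩
    exact hSb g hg
  obtain ⟨u, huS, hufin, hucov⟩ :=
    totallyBounded_iff_subset.1 hTB _ (Metric.dist_mem_uniformity hr)
  have hpre : ∀ c ∈ u, ∃ f : Y →L[𝕜] 𝕜, ‖f‖ ≤ 1 ∧ Φ f = c := by
    intro c hc
    obtain ⟨f, hf, hfc⟩ := huS hc
    exact ⟨f, hf, hfc⟩
  choose! ψ hψ1 hψ2 using hpre
  refine ⟨ψ '' u, hufin.image _, ?_, ?_⟩
  · rintro _ ⟨c, hc, rfl⟩
    exact hψ1 c hc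
  · intro g hg
    have hgS : Φ g ∈ Φ '' {g : Y →L[𝕜] 𝕜 | ‖g‖ ≤ 1} := ⟨g, hg, rfl⟩
    obtain ⟨c, hc, hgc⟩ := by
      have := hucov hgS
      simpa only [Set.mem_iUnion, Set.mem_setOf_eq, exists_prop] using this
    refine ⟨ψ c, ⟨c, hc, rfl⟩, ?_⟩
    have hdist : ∀ k : ↥t, ‖g (k : Y) - (ψ c) (k : Y)‖ < r := by
      intro k
      have h1 : dist (Φ g) (Φ (ψ c)) < r := by rw [hψ2 c hc]; exact hgc
      have := (dist_pi_lt_iff hr).1 h1 k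
      simpa [hΦ, dist_eq_norm] using this
    refine BPB.opnorm_le_of_unit _ (by linarith) fun x hx => ?_
    have hTx : T x ∈ K := hKT ⟨x, mem_closedBall_zero_iff.2 hx, rfl⟩
    obtain ⟨k, hkt, hTk⟩ : ∃ k ∈ t, T x ∈ Metric.ball k r := by
      have := htK hTx
      simpa only [Set.mem_iUnion, exists_prop] using this
    have hTkr : ‖T x - k‖ < r := by rwa [Metric.mem_ball, dist_eq_norm] at hTk
    have hdec : g (T x) - (ψ c) (T x)
        = g (T x - k) + ((g k - (ψ c) k) + ((ψ c) (k - T x))) := by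
      simp only [map_sub]; ring
    have h1 : ‖g (T x - k)‖ ≤ 1 * r :=
      le_trans (g.le_opNorm _) (mul_le_mul hg hTkr.le (norm_nonneg _) zero_le_one)
    have h2 : ‖g k - (ψ c) k‖ ≤ r := (hdist ⟨k, hkt⟩).le
    have h3 : ‖(ψ c) (k - T x)‖ ≤ 1 * r := by
      refine le_trans ((ψ c).le_opNorm _) (mul_le_mul (hψ1 c hc) ?_ (norm_nonneg _) zero_le_one)
      rw [norm_sub_rev]; exact hTkr.le
    calc ‖(g.comp T - (ψ c).comp T) x‖ = ‖g (T x) - (ψ c) (T x)‖ := by simp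
    _ ≤ ‖g (T x - k)‖ + (‖g k - (ψ c) k‖ + ‖(ψ c) (k - T x)‖) := by
        rw [hdec]; exact (norm_add_le _ _).trans (by gcongr; exact norm_add_le _ _)
    _ ≤ 1 * r + (r + 1 * r) := by gcongr
    _ = 3 * r := by ring

lemma BPB.opnorm_smul (c : 𝕜) (A : X →L[𝕜] Y) : ‖c • A‖ = ‖c‖ * ‖A‖ := by
  rcases eq_or_ne c 0 with rfl | hc
  · simp
  · refine le_antisymm (ContinuousLinearMap.opNorm_smul_le c A) ?_
    have h := ContinuousLinearMap.opNorm_smul_le c⁻¹ (c • A)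
    rw [inv_smul_smul₀ hc, norm_inv] at h
    have hcpos : 0 < ‖c‖ := norm_pos_iff.2 hc
    nlinarith [mul_inv_cancel₀ hcpos.ne', norm_nonneg (c • A)]

variable {Λ : Type*} [Preorder Λ] [IsDirected Λ (· ≤ ·)] [Nonempty Λ]

lemma BPB.eventually_close (P : Λ → X →L[𝕜] X) (hnorm : ∀ α, ‖P α‖ = 1)
    (hconv' : ∀ x' : StrongDual 𝕜 X, ∀ ε : ℝ, 0 < ε →
      ∃ α₀ : Λ, ∀ α, α₀ ≤ α → ‖x'.comp (P α) - x'‖ < ε)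
    (T : X →L[𝕜] Y) (hTc : IsCompactOperator T) {δ : ℝ} (hδ : 0 < δ) :
    ∃ α₀ : Λ, ∀ α, α₀ ≤ α → ‖T.comp (P α) - T‖ ≤ δ := by
  classical
  have hr : 0 < δ / 8 := by linarith
  obtain ⟨F, hFfin, hF1, hFnet⟩ := BPB.dual_net T hTc hr
  choose! asel hasel using fun f : Y →L[𝕜] 𝕜 => hconv' (f.comp T) (δ / 8) hr
  obtain ⟨α₀, hα₀⟩ := (hFfin.toFinset.image asel).exists_le
  refine ⟨α₀, fun α hα => ?_⟩
  refine BPB.opnorm_le_of_unit _ hδ.le fun x hx => ?_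
  have hPx : ‖P α x‖ ≤ 1 := by
    have h := (P α).le_opNorm x
    rw [hnorm α, one_mul] at h
    linarith
  set z := (T.comp (P α) - T) x with hzdef
  obtain ⟨g, hg1, hgz⟩ := exists_dual_vector'' 𝕜 z
  obtain ⟨f, hfF, hgf⟩ := hFnet g hg1
  have hασ : asel f ≤ α :=
    le_trans (hα₀ _ (Finset.mem_image_of_mem asel (hFfin.mem_toFinset.2 hfF))) hα
  have hmid := hasel f α hασ
  have hz : ‖z‖ = ‖g z‖ := by
    rw [hgz, RCLike.norm_ofReal, abs_norm]
  have hzeq : g z = (g.comp T) (P α x) - (g.comp T) x := by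
    simp [hzdef]
  have hdec : g z = ((g.comp T - f.comp T) (P α x))
      + ((((f.comp T).comp (P α) - f.comp T)) x + ((f.comp T - g.comp T) x)) := by
    rw [hzeq]
    simp only [ContinuousLinearMap.sub_apply, ContinuousLinearMap.comp_apply]
    ring
  have h1 : ‖(g.comp T - f.comp T) (P α x)‖ ≤ 3 * (δ / 8) :=
    le_trans ((g.comp T - f.comp T).le_opNorm _)
      (by nlinarith [norm_nonneg (g.comp T - f.comp T),
        (g.comp T - f.comp T).opNorm_nonneg])
  have h2 : ‖(((f.comp T).comp (P α) - f.comp T)) x‖ ≤ δ / 8 := by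
    have h := ((f.comp T).comp (P α) - f.comp T).le_opNorm x
    nlinarith [norm_nonneg (((f.comp T).comp (P α) - f.comp T) x),
      ((f.comp T).comp (P α) - f.comp T).opNorm_nonneg, norm_nonneg x]
  have h3 : ‖(f.comp T - g.comp T) x‖ ≤ 3 * (δ / 8) := by
    have hle := (f.comp T - g.comp T).le_opNorm x
    rw [norm_sub_rev] at hgf
    nlinarith [norm_nonneg ((f.comp T - g.comp T) x),
      (f.comp T - g.comp T).opNorm_nonneg, norm_nonneg x]
  calc ‖z‖ = ‖g z‖ := hz
  _ ≤ ‖(g.comp T - f.comp T) (P α x)‖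
      + (‖(((f.comp T).comp (P α) - f.comp T)) x‖ + ‖(f.comp T - g.comp T) x‖) := by
      rw [hdec]; exact (norm_add_le _ _).trans (by gcongr; exact norm_add_le _ _)
  _ ≤ 3 * (δ / 8) + (δ / 8 + 3 * (δ / 8)) := by gcongr
  _ ≤ δ := by linarith

lemma BPB.approx_point (P : Λ → X →L[𝕜] X)
    (hmono : ∀ α β, α ≤ β → LinearMap.range (P α : X →ₗ[𝕜] X) ≤ LinearMap.range (P β : X →ₗ[𝕜] X))
    (hconv' : ∀ x' : StrongDual 𝕜 X, ∀ ε : ℝ, 0 < ε →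
      ∃ α₀ : Λ, ∀ α, α₀ ≤ α → ‖x'.comp (P α) - x'‖ < ε)
    (x₀ : X) {δ : ℝ} (hδ : 0 < δ) :
    ∃ α₁, ∃ m, m ∈ LinearMap.range (P α₁ : X →ₗ[𝕜] X) ∧ ‖x₀ - m‖ < δ := by
  classical
  set V := (⨆ α, LinearMap.range (P α : X →ₗ[𝕜] X)).topologicalClosure with hV
  haveI hVc : IsClosed ((V : Set X)) := Submodule.isClosed_topologicalClosure _
  have hrange : ∀ β, LinearMap.range (P β : X →ₗ[𝕜] X) ≤ V := fun β =>
    le_trans (le_iSup (fun α => LinearMap.range (P α : X →ₗ[𝕜] X)) β) (Submodule.le_topologicalClosure _)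
  have hx₀V : x₀ ∈ V := by
    by_contra hx
    have hq0 : (Submodule.Quotient.mk x₀ : X ⧸ V) ≠ 0 := by
      simpa [Submodule.Quotient.mk_eq_zero] using hx
    obtain ⟨g, hg1, hgx⟩ := exists_dual_vector 𝕜 _ (norm_ne_zero_iff.2 hq0)
    let π : X →L[𝕜] X ⧸ V := LinearMap.mkContinuous V.mkQ 1 (fun x => by
      simpa [one_mul] using Submodule.Quotient.norm_mk_le V x)
    have hπ : ∀ x : X, π x = Submodule.Quotient.mk x := fun x => rfl
    set f : StrongDual 𝕜 X := g.comp π with hf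
    have hfP : ∀ β, f.comp (P β) = 0 := by
      intro β
      ext x
      have hmem : P β x ∈ V := hrange β ⟨x, rfl⟩
      have : (Submodule.Quotient.mk (P β x) : X ⧸ V) = 0 :=
        (Submodule.Quotient.mk_eq_zero V).2 hmem
      simp [hf, hπ, this]
    have hf0 : f = 0 := by
      by_contra hfne
      have hfpos : 0 < ‖f‖ := norm_pos_iff.2 hfne
      obtain ⟨β₀, hβ₀⟩ := hconv' f ‖f‖ hfpos
      have h := hβ₀ β₀ le_rfl
      rw [hfP β₀] at h
      simp at h
    have hgx0 : g (Submodule.Quotient.mk x₀) = 0 := by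
      have : f x₀ = 0 := by rw [hf0]; rfl
      simpa [hf, hπ] using this
    rw [hgx] at hgx0
    have : ‖(Submodule.Quotient.mk x₀ : X ⧸ V)‖ = 0 := by exact_mod_cast hgx0
    exact hq0 (norm_eq_zero.1 this)
  have hx₀cl : x₀ ∈ closure ((⨆ α, LinearMap.range (P α : X →ₗ[𝕜] X) : Submodule 𝕜 X) : Set X) := hx₀V
  obtain ⟨m, hmmem, hmd⟩ := Metric.mem_closure_iff.1 hx₀cl δ hδ
  have hdir : Directed (· ≤ ·) fun α => LinearMap.range (P α : X →ₗ[𝕜] X) := fun i j =>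
    (directed_of (· ≤ ·) i j).imp fun k hk => ⟨hmono i k hk.1, hmono j k hk.2⟩
  obtain ⟨α₁, hα₁⟩ := (Submodule.mem_iSup_of_directed _ hdir).1 hmmem
  exact ⟨α₁, m, hα₁, by rwa [← dist_eq_norm]⟩

end BPBHelpers

/-- Corollary 2.4: a net of norm-one projections with increasing ranges whose adjoints
converge pointwise in norm to the identity transfers the BPBp for compact operators from
the ranges to the whole space. -/
theorem bpbp_compact_of_increasing_net_of_projections {𝕜 : Type*} [RCLike 𝕜] {X Y : Type*}
    [NormedAddCommGroup X] [NormedSpace 𝕜 X] [CompleteSpace X]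
    [NormedAddCommGroup Y] [NormedSpace 𝕜 Y] [CompleteSpace Y]
    {Λ : Type*} [Preorder Λ] [IsDirected Λ (· ≤ ·)] [Nonempty Λ]
    (P : Λ → X →L[𝕜] X)
    (hproj : ∀ α, ∀ x : X, P α (P α x) = P α x)
    (hnorm : ∀ α, ‖P α‖ = 1)
    (hmono : ∀ α β, α ≤ β → LinearMap.range (P α : X →ₗ[𝕜] X) ≤ LinearMap.range (P β : X →ₗ[𝕜] X))
    (hconv' : ∀ x' : StrongDual 𝕜 X, ∀ ε : ℝ, 0 < ε →
      ∃ α₀ : Λ, ∀ α, α₀ ≤ α → ‖x'.comp (P α) - x'‖ < ε)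
    (η : ℝ → ℝ)
    (hBPB : ∀ α, BPBpCompactWith 𝕜 (↥(LinearMap.range (P α : X →ₗ[𝕜] X))) Y η) :
    BPBpCompact 𝕜 X Y := by
  classical
  refine ⟨fun ε => η (ε / 2) / 2, fun ε hε => ?_⟩
  obtain ⟨α'⟩ := ‹Nonempty Λ›
  have hε2 : 0 < ε / 2 := by linarith
  have hη2 : 0 < η (ε / 2) := (hBPB α' (ε / 2) hε2).1
  refine ⟨by linarith, ?_⟩
  intro T hTc hT1 x₀ hx₀ hTx₀
  obtain ⟨δ, hδpos, hδε, hδhalf, hδη⟩ :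
      ∃ δ : ℝ, 0 < δ ∧ δ ≤ ε / 8 ∧ δ ≤ 1 / 2 ∧ δ ≤ η (ε / 2) / 8 :=
    ⟨min (ε / 8) (min (1 / 2) (η (ε / 2) / 8)),
      lt_min (by linarith) (lt_min one_half_pos (by linarith)), min_le_left _ _,
      le_trans (min_le_right _ _) (min_le_left _ _),
      le_trans (min_le_right _ _) (min_le_right _ _)⟩
  obtain ⟨α₀, hα₀⟩ := BPB.eventually_close P hnorm hconv' T hTc hδpos
  obtain ⟨α₁, m, hmR, hmx₀⟩ := BPB.approx_point P hmono hconv' x₀ hδpos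
  obtain ⟨α, hα₀α, hα₁α⟩ := directed_of (· ≤ ·) α₀ α₁
  have hmRα : m ∈ LinearMap.range (P α : X →ₗ[𝕜] X) := hmono α₁ α hα₁α hmR
  have hPle : ∀ x : X, ‖P α x‖ ≤ ‖x‖ := fun x => by
    have h := (P α).le_opNorm x; rwa [hnorm α, one_mul] at h
  have hsubnorm : ∀ u : ↥(LinearMap.range (P α : X →ₗ[𝕜] X)), ‖u‖ = ‖(u : X)‖ := fun u => rfl
  -- the corestriction of `P α`
  set Q : X →L[𝕜] ↥(LinearMap.range (P α : X →ₗ[𝕜] X)) :=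
    (P α).codRestrict (LinearMap.range (P α : X →ₗ[𝕜] X)) (fun x => ⟨x, rfl⟩) with hQdef
  have hQapp : ∀ x : X, (Q x : X) = P α x := fun x => rfl
  clear_value Q
  clear hQdef
  have hQ1 : ‖Q‖ ≤ 1 := by
    refine ContinuousLinearMap.opNorm_le_bound _ zero_le_one fun x => ?_
    rw [one_mul, hsubnorm, hQapp]
    exact hPle x
  -- the restriction of `T`
  set Tres : ↥(LinearMap.range (P α : X →ₗ[𝕜] X)) →L[𝕜] Y :=
    T.comp (LinearMap.range (P α : X →ₗ[𝕜] X)).subtypeL with hTresdef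
  have hTresapp : ∀ u : ↥(LinearMap.range (P α : X →ₗ[𝕜] X)), Tres u = T (u : X) := fun u => rfl
  have hTresC : IsCompactOperator Tres := hTc.comp_clm (LinearMap.range (P α : X →ₗ[𝕜] X)).subtypeL
  clear_value Tres
  clear hTresdef
  have hTres_le : ‖Tres‖ ≤ 1 := by
    refine ContinuousLinearMap.opNorm_le_bound _ zero_le_one fun u => ?_
    rw [one_mul, hTresapp, hsubnorm]
    calc ‖T (u : X)‖ ≤ ‖T‖ * ‖(u : X)‖ := T.le_opNorm _
    _ = ‖(u : X)‖ := by rw [hT1, one_mul]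
  have hfact : T.comp (P α) = Tres.comp Q := by
    ext x
    rw [ContinuousLinearMap.comp_apply, ContinuousLinearMap.comp_apply, hTresapp, hQapp]
  have hTPle : ‖T.comp (P α) - T‖ ≤ δ := hα₀ α hα₀α
  have hTPge : 1 - δ ≤ ‖T.comp (P α)‖ := by
    have habs := abs_norm_sub_norm_le (T.comp (P α)) T
    rw [hT1] at habs
    have h2 := abs_le.1 habs
    linarith [h2.1]
  have hTP_le1 : ‖T.comp (P α)‖ ≤ 1 := by
    calc ‖T.comp (P α)‖ ≤ ‖T‖ * ‖P α‖ := ContinuousLinearMap.opNorm_comp_le _ _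
    _ = 1 := by rw [hT1, hnorm α, one_mul]
  have hTres_ge : 1 - δ ≤ ‖Tres‖ := by
    have h1 : ‖T.comp (P α)‖ ≤ ‖Tres‖ := by
      rw [hfact]
      exact le_trans (ContinuousLinearMap.opNorm_comp_le _ _)
        (mul_le_of_le_one_right (norm_nonneg _) hQ1)
    linarith
  have hTres_pos : (0 : ℝ) < ‖Tres‖ := by linarith
  have hinv1 : 1 ≤ ‖Tres‖⁻¹ := by
    have h := mul_inv_cancel₀ hTres_pos.ne'
    nlinarith [inv_nonneg.2 hTres_pos.le]
  have hinv2δ : ‖Tres‖⁻¹ - 1 ≤ 2 * δ := by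
    have h := mul_inv_cancel₀ hTres_pos.ne'
    nlinarith [inv_nonneg.2 hTres_pos.le]
  set c : 𝕜 := ((‖Tres‖⁻¹ : ℝ) : 𝕜) with hc
  have hcnorm : ‖c‖ = ‖Tres‖⁻¹ := by
    rw [hc, RCLike.norm_ofReal]
    exact abs_of_nonneg (inv_nonneg.2 hTres_pos.le)
  -- the normalized restriction
  set That : ↥(LinearMap.range (P α : X →ₗ[𝕜] X)) →L[𝕜] Y := c • Tres with hThatdef
  have hThatapp : ∀ u : ↥(LinearMap.range (P α : X →ₗ[𝕜] X)), That u = c • Tres u := fun u => rfl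
  have hThatC : IsCompactOperator That := hTresC.smul c
  have hThat1 : ‖That‖ = 1 := by
    have h1 : ‖That‖ = ‖c‖ * ‖Tres‖ := by rw [hThatdef]; exact BPB.opnorm_smul c Tres
    rw [h1, hcnorm, inv_mul_cancel₀ hTres_pos.ne']
  have hThatcomp : That.comp Q = c • (T.comp (P α)) := by
    rw [hThatdef, ContinuousLinearMap.smul_comp, hfact]
  clear_value That
  clear hThatdef
  -- the point x₀'
  have hm_norm : 1 - δ ≤ ‖m‖ := by
    have habs := abs_norm_sub_norm_le x₀ m
    rw [hx₀] at habs
    have h2 := abs_le.1 habs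
    linarith [h2.1, hmx₀]
  have hm_pos : (0 : ℝ) < ‖m‖ := by linarith
  set m' : X := ((‖m‖⁻¹ : ℝ) : 𝕜) • m with hm'
  have hm'R : m' ∈ LinearMap.range (P α : X →ₗ[𝕜] X) := (LinearMap.range (P α : X →ₗ[𝕜] X)).smul_mem _ hmRα
  set x₀' : ↥(LinearMap.range (P α : X →ₗ[𝕜] X)) := ⟨m', hm'R⟩ with hx₀'def
  have hx₀'coe : (x₀' : X) = m' := rfl
  clear_value x₀'
  have hx₀'1 : ‖x₀'‖ = 1 := by
    rw [hsubnorm, hx₀'coe, hm', norm_smul, RCLike.norm_ofReal,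
      abs_of_nonneg (inv_nonneg.2 hm_pos.le), inv_mul_cancel₀ hm_pos.ne']
  have hmm' : ‖m - m'‖ < δ := by
    have h1 : m - m' = ((1 - ‖m‖⁻¹ : ℝ) : 𝕜) • m := by
      rw [hm']
      push_cast
      rw [sub_smul, one_smul]
    have h2 : ‖m - m'‖ = |1 - ‖m‖⁻¹| * ‖m‖ := by
      rw [h1, norm_smul, RCLike.norm_ofReal]
    have h3 : |1 - ‖m‖⁻¹| * ‖m‖ = |‖m‖ - 1| := by
      rw [← abs_of_pos hm_pos, ← abs_mul]
      congr 1
      field_simp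
      rw [abs_of_pos hm_pos]; ring
    have h4 : |‖m‖ - 1| ≤ ‖x₀ - m‖ := by
      have h5 := abs_norm_sub_norm_le m x₀
      rw [hx₀, norm_sub_rev] at h5
      exact h5
    rw [h2, h3]
    exact lt_of_le_of_lt h4 hmx₀
  have hx₀x₀' : ‖x₀ - (x₀' : X)‖ < 2 * δ := by
    rw [hx₀'coe]
    have heq : x₀ - m' = (x₀ - m) + (m - m') := by abel
    rw [heq]
    calc ‖(x₀ - m) + (m - m')‖ ≤ ‖x₀ - m‖ + ‖m - m'‖ := norm_add_le _ _
    _ < δ + δ := add_lt_add hmx₀ hmm'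
    _ = 2 * δ := by ring
  -- ‖That x₀'‖ is large
  have hTx₀'big : 1 - η (ε / 2) < ‖That x₀'‖ := by
    have e1 : ‖That x₀'‖ = ‖Tres‖⁻¹ * ‖T (x₀' : X)‖ := by
      rw [hThatapp, hTresapp, norm_smul, hcnorm]
    have e2 : ‖T (x₀' : X)‖ ≤ ‖That x₀'‖ := by
      rw [e1]
      nlinarith [norm_nonneg (T (x₀' : X))]
    have e3 : ‖T x₀‖ - 2 * δ < ‖T (x₀' : X)‖ := by
      have h5 : ‖T x₀ - T (x₀' : X)‖ ≤ ‖x₀ - (x₀' : X)‖ := by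
        rw [← map_sub]
        calc ‖T (x₀ - (x₀' : X))‖ ≤ ‖T‖ * ‖x₀ - (x₀' : X)‖ := T.le_opNorm _
        _ = ‖x₀ - (x₀' : X)‖ := by rw [hT1, one_mul]
      have h6 := norm_sub_norm_le (T x₀) (T (x₀' : X))
      linarith [hx₀x₀']
    have e4 : 1 - η (ε / 2) < ‖T x₀‖ - 2 * δ := by
      have hTx₀' : 1 - η (ε / 2) / 2 < ‖T x₀‖ := hTx₀
      linarith
    linarith
  -- apply the BPB property on the subspace
  obtain ⟨S₀, u₁, hS₀C, hS₀1, hu₁1, hS₀u₁, hu₁x₀', hS₀That⟩ :=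
    (hBPB α (ε / 2) hε2).2 That hThatC hThat1 x₀' hx₀'1 hTx₀'big
  set S : X →L[𝕜] Y := S₀.comp Q with hSdef
  have hSapp : ∀ x : X, S x = S₀ (Q x) := fun x => rfl
  have hSC : IsCompactOperator S := hS₀C.comp_clm Q
  have hScomp : ∀ A : ↥(LinearMap.range (P α : X →ₗ[𝕜] X)) →L[𝕜] Y, (S₀ - A).comp Q = S - A.comp Q :=
    fun A => by rw [ContinuousLinearMap.sub_comp, hSdef]
  have hSle : ‖S‖ ≤ ‖S₀‖ * ‖Q‖ := by
    rw [hSdef]; exact ContinuousLinearMap.opNorm_comp_le _ _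
  clear_value S
  clear hSdef
  set x₁ : X := (u₁ : X) with hx₁
  have hQx₁ : Q x₁ = u₁ := by
    apply Subtype.ext
    rw [hQapp, hx₁]
    obtain ⟨z, hz⟩ := u₁.2
    rw [← hz]; exact hproj α z
  have hSx₁ : S x₁ = S₀ u₁ := by rw [hSapp, hQx₁]
  have hx₁1 : ‖x₁‖ = 1 := by rw [hx₁, ← hsubnorm, hu₁1]
  have hSx₁1 : ‖S x₁‖ = 1 := by rw [hSx₁, hS₀u₁]
  have hS1 : ‖S‖ = 1 := by
    refine le_antisymm ?_ ?_
    · calc ‖S‖ ≤ ‖S₀‖ * ‖Q‖ := hSle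
      _ ≤ 1 := by rw [hS₀1, one_mul]; exact hQ1
    · have h := S.le_opNorm x₁
      rw [hSx₁1, hx₁1, mul_one] at h
      exact h
  have hx₀x₁ : ‖x₀ - x₁‖ < ε := by
    have hcoe : ‖(x₀' : X) - x₁‖ = ‖x₀' - u₁‖ := by rw [hx₁, hsubnorm]; rfl
    calc ‖x₀ - x₁‖ = ‖(x₀ - (x₀' : X)) + ((x₀' : X) - x₁)‖ := by congr 1; abel
    _ ≤ ‖x₀ - (x₀' : X)‖ + ‖(x₀' : X) - x₁‖ := norm_add_le _ _
    _ < 2 * δ + ε / 2 := by rw [hcoe]; exact add_lt_add hx₀x₀' hu₁x₀'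
    _ ≤ ε := by linarith
  have hST : ‖S - T‖ < ε := by
    have hsplit : S - T = (S₀ - That).comp Q
        + ((c • (T.comp (P α)) - T.comp (P α)) + (T.comp (P α) - T)) := by
      rw [hScomp, hThatcomp]
      abel
    have t1 : ‖(S₀ - That).comp Q‖ < ε / 2 := by
      calc ‖(S₀ - That).comp Q‖ ≤ ‖S₀ - That‖ * ‖Q‖ := ContinuousLinearMap.opNorm_comp_le _ _
      _ ≤ ‖S₀ - That‖ := mul_le_of_le_one_right (norm_nonneg _) hQ1
      _ < ε / 2 := hS₀That
    have t2 : ‖c • (T.comp (P α)) - T.comp (P α)‖ ≤ 2 * δ := by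
      have h1 : c • (T.comp (P α)) - T.comp (P α) = (c - 1) • (T.comp (P α)) := by
        ext x
        simp [sub_smul]
      have h2 : ‖c - 1‖ = ‖Tres‖⁻¹ - 1 := by
        have h3 : c - 1 = ((‖Tres‖⁻¹ - 1 : ℝ) : 𝕜) := by rw [hc]; push_cast; ring
        rw [h3, RCLike.norm_ofReal]
        exact abs_of_nonneg (by linarith)
      have h4 : ‖(c - 1) • (T.comp (P α))‖ = ‖c - 1‖ * ‖T.comp (P α)‖ :=
        BPB.opnorm_smul (c - 1) (T.comp (P α))
      rw [h1, h4, h2]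
      calc (‖Tres‖⁻¹ - 1) * ‖T.comp (P α)‖ ≤ (‖Tres‖⁻¹ - 1) * 1 :=
        mul_le_mul_of_nonneg_left hTP_le1 (by linarith)
      _ ≤ 2 * δ := by linarith
    calc ‖S - T‖ ≤ ‖(S₀ - That).comp Q‖
        + ‖(c • (T.comp (P α)) - T.comp (P α)) + (T.comp (P α) - T)‖ := by
          rw [hsplit]; exact norm_add_le _ _
    _ ≤ ‖(S₀ - That).comp Q‖ + (‖c • (T.comp (P α)) - T.comp (P α)‖ + ‖T.comp (P α) - T‖) := by
          gcongr; exact norm_add_le _ _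
    _ < ε / 2 + (2 * δ + δ) := add_lt_add_of_lt_of_le t1 (add_le_add t2 hTPle)
    _ ≤ ε := by linarith
  exact ⟨S, x₁, hSC, hS1, hx₁1, hSx₁1, hx₀x₁, hST⟩
end
end

section
/- Let X and Y be Banach spaces. Suppose there exist a nonempty directed preordered set Λ and a net (Q_λ)_{λ∈Λ} of norm-one projections on Y such that ‖Q_λ y − y‖ → 0 along Λ for every y ∈ Y. If there is a function η : (0,∞) → (0,∞) such that all the pairs (X, Q_λ(Y)), λ ∈ Λ, have the BPBp for compact operators with the function η (where Q_λ(Y) is the range of Q_λ with the norm inherited from Y), then the pair (X, Y) has the BPBp for compact operators. -/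
open MeasureTheory

noncomputable section

theorem aux_approx {𝕜 : Type*} [RCLike 𝕜] {X Y : Type*}
    [NormedAddCommGroup X] [NormedSpace 𝕜 X]
    [NormedAddCommGroup Y] [NormedSpace 𝕜 Y]
    {Λ : Type*} [Preorder Λ] [IsDirected Λ (· ≤ ·)] [Nonempty Λ]
    (Q : Λ → Y →L[𝕜] Y) (hnorm : ∀ l, ‖Q l‖ = 1)
    (hconv : ∀ y : Y, ∀ ε : ℝ, 0 < ε → ∃ l₀ : Λ, ∀ l, l₀ ≤ l → ‖Q l y - y‖ < ε)
    (T : X →L[𝕜] Y) (hT : IsCompactOperator T) {δ : ℝ} (hδ : 0 < δ) :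
    ∃ l, ‖(Q l).comp T - T‖ < δ := by
  classical
  have hK : IsCompact (closure (⇑T '' Metric.closedBall 0 1)) :=
    hT.isCompact_closure_image_closedBall (𝕜₁ := 𝕜) 1
  obtain ⟨t, htfin, htcover⟩ := Metric.totallyBounded_iff.1 hK.totallyBounded (δ/8) (by linarith)
  choose g hg using fun y : Y => hconv y (δ/8) (by linarith)
  obtain ⟨l, hl⟩ := Finset.exists_le (htfin.toFinset.image g)
  refine ⟨l, ?_⟩
  have hbound : ∀ u : X, ‖u‖ ≤ 1 → ‖Q l (T u) - T u‖ ≤ δ/2 := by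
    intro u hu
    have hTu : T u ∈ ⋃ y ∈ t, Metric.ball y (δ/8) :=
      htcover (subset_closure ⟨u, by simpa [Metric.mem_closedBall] using hu, rfl⟩)
    simp only [Set.mem_iUnion, Metric.mem_ball] at hTu
    obtain ⟨y, hyt, hy⟩ := hTu
    have hly : g y ≤ l := hl _ (Finset.mem_image_of_mem g (htfin.mem_toFinset.2 hyt))
    have h1 : ‖Q l (T u - y)‖ ≤ ‖T u - y‖ := by
      calc ‖Q l (T u - y)‖ ≤ ‖Q l‖ * ‖T u - y‖ := (Q l).le_opNorm _
      _ = ‖T u - y‖ := by rw [hnorm l, one_mul]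
    have h2 : ‖Q l y - y‖ < δ/8 := hg y l hly
    have h3 : ‖T u - y‖ < δ/8 := by rwa [← dist_eq_norm]
    have heq : Q l (T u) - T u = Q l (T u - y) + (Q l y - y) + (y - T u) := by
      simp only [map_sub]; abel
    rw [heq]
    calc ‖Q l (T u - y) + (Q l y - y) + (y - T u)‖
        ≤ ‖Q l (T u - y) + (Q l y - y)‖ + ‖y - T u‖ := norm_add_le _ _
      _ ≤ ‖Q l (T u - y)‖ + ‖Q l y - y‖ + ‖y - T u‖ := by
          gcongr; exact norm_add_le _ _
      _ ≤ δ/8 + δ/8 + δ/8 := by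
          have h3' : ‖y - T u‖ < δ/8 := by rwa [norm_sub_rev] at h3
          linarith
      _ ≤ δ/2 := by linarith
  have hle : ‖(Q l).comp T - T‖ ≤ δ/2 := by
    refine ContinuousLinearMap.opNorm_le_bound _ (by linarith) fun x => ?_
    rcases eq_or_ne x 0 with rfl | hx
    · simp
    · have hxn : (0:ℝ) < ‖x‖ := norm_pos_iff.2 hx
      obtain ⟨u, hun, hxu⟩ : ∃ u : X, ‖u‖ = 1 ∧ x = (‖x‖ : 𝕜) • u := by
        refine ⟨((‖x‖ : 𝕜))⁻¹ • x, ?_, ?_⟩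
        · rw [norm_smul, norm_inv, RCLike.norm_ofReal, abs_of_nonneg hxn.le,
            inv_mul_cancel₀ hxn.ne']
        · rw [smul_smul, mul_inv_cancel₀ (by exact_mod_cast hxn.ne'), one_smul]
      have heq2 : ((Q l).comp T - T) x = (‖x‖ : 𝕜) • (((Q l).comp T - T) u) := by
        conv_lhs => rw [hxu]
        exact ContinuousLinearMap.map_smul _ _ _
      rw [heq2, norm_smul, RCLike.norm_ofReal, abs_of_nonneg hxn.le, mul_comm]
      have hb := hbound u hun.le
      simp only [ContinuousLinearMap.sub_apply, ContinuousLinearMap.comp_apply] at hb ⊢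
      gcongr
  linarith

/-- Proposition 2.5: a net of norm-one projections on the range space converging pointwise
in norm to the identity transfers the BPBp for compact operators from the ranges to the
whole space. -/
theorem bpbp_compact_of_net_of_projections_range {𝕜 : Type*} [RCLike 𝕜] {X Y : Type*}
    [NormedAddCommGroup X] [NormedSpace 𝕜 X] [CompleteSpace X]
    [NormedAddCommGroup Y] [NormedSpace 𝕜 Y] [CompleteSpace Y]
    {Λ : Type*} [Preorder Λ] [IsDirected Λ (· ≤ ·)] [Nonempty Λ]
    (Q : Λ → Y →L[𝕜] Y)
    (hproj : ∀ l, ∀ y : Y, Q l (Q l y) = Q l y)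
    (hnorm : ∀ l, ‖Q l‖ = 1)
    (hconv : ∀ y : Y, ∀ ε : ℝ, 0 < ε → ∃ l₀ : Λ, ∀ l, l₀ ≤ l → ‖Q l y - y‖ < ε)
    (η : ℝ → ℝ)
    (hBPB : ∀ l, BPBpCompactWith 𝕜 X (↥(LinearMap.range (Q l : Y →ₗ[𝕜] Y))) η) :
    BPBpCompact 𝕜 X Y := by
  classical
  refine ⟨fun ε => η (ε/2) / 4, fun ε hε => ?_⟩
  have l₀ : Λ := Classical.arbitrary Λ
  have hη2 : 0 < η (ε/2) := (hBPB l₀ (ε/2) (by linarith)).1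
  refine ⟨by positivity, fun T hT hTnorm x₀ hx₀ hTx₀ => ?_⟩
  have hTx₀' : 1 - η (ε/2)/4 < ‖T x₀‖ := hTx₀
  set δ : ℝ := min (min (η (ε/2) / 8) (ε/9)) (1/4) with hδdef
  have hδpos : 0 < δ :=
    lt_min (lt_min (by linarith) (by linarith)) (by norm_num)
  have hδη : δ ≤ η (ε/2) / 8 := le_trans (min_le_left _ _) (min_le_left _ _)
  have hδε : δ ≤ ε/9 := le_trans (min_le_left _ _) (min_le_right _ _)
  have hδq : δ ≤ 1/4 := min_le_right _ _
  obtain ⟨l, hl⟩ := aux_approx Q hnorm hconv T hT hδpos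
  set A : X →L[𝕜] Y := (Q l).comp T with hAdef
  have hAT : ‖A - T‖ < δ := hl
  have hcub : |‖A‖ - 1| ≤ ‖A - T‖ := by
    calc |‖A‖ - 1| = |‖A‖ - ‖T‖| := by rw [hTnorm]
    _ ≤ ‖A - T‖ := abs_norm_sub_norm_le _ _
  obtain ⟨hc1, hc2⟩ := abs_le.1 hcub
  set c : ℝ := ‖A‖ with hcdef
  have hcl : 1 - δ ≤ c := by linarith
  have hcu : c ≤ 1 + δ := by linarith
  have hc3 : (3:ℝ)/4 ≤ c := by linarith
  have hcpos : (0:ℝ) < c := by linarith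
  have hck : (c : 𝕜) ≠ 0 := by exact_mod_cast hcpos.ne'
  have hBPBl := (hBPB l (ε/2) (by linarith)).2
  obtain ⟨p, hpeq⟩ : ∃ p : Submodule 𝕜 Y, LinearMap.range (Q l : Y →ₗ[𝕜] Y) = p :=
    ⟨_, rfl⟩
  rw [hpeq] at hBPBl
  have hmem : ∀ x, A x ∈ p := fun x => hpeq ▸ ⟨T x, rfl⟩
  have hpclosed : IsClosed (p : Set Y) := by
    have hset : (p : Set Y) = {y | Q l y = y} := by
      ext y
      constructor
      · intro hy
        rw [← hpeq] at hy
        obtain ⟨z, rfl⟩ := hy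
        exact hproj l z
      · intro h
        rw [← hpeq]
        exact ⟨y, h⟩
    rw [hset]
    exact isClosed_eq (Q l).continuous continuous_id
  set B : X →L[𝕜] p := A.codRestrict p hmem with hBdef
  have hBA : ∀ x, ‖B x‖ = ‖A x‖ := fun x => rfl
  have hBnorm : ‖B‖ = c := ContinuousLinearMap.opNorm_ext B A hBA
  have hAcomp : IsCompactOperator A := by
    have h := hT.clm_comp (Q l)
    simpa [hAdef, ContinuousLinearMap.coe_comp'] using h
  have hBcomp : IsCompactOperator B := hAcomp.codRestrict hmem hpclosed
  set Tt : X →L[𝕜] p := ((c : 𝕜))⁻¹ • B with hTtdef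
  have hcknorm : ‖((c : 𝕜))⁻¹‖ = c⁻¹ := by
    rw [norm_inv, RCLike.norm_ofReal, abs_of_pos hcpos]
  have hTtA : ∀ x : X, ‖Tt x‖ = ‖(((c : 𝕜))⁻¹ • A) x‖ := fun x => by
    rw [ContinuousLinearMap.smul_apply, ContinuousLinearMap.smul_apply,
      norm_smul ((c : 𝕜))⁻¹ (B x), norm_smul ((c : 𝕜))⁻¹ (A x), hBA]
  have hTtnorm : ‖Tt‖ = 1 := by
    rw [ContinuousLinearMap.opNorm_ext Tt (((c : 𝕜))⁻¹ • A) hTtA,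
      norm_smul ((c : 𝕜))⁻¹ A, hcknorm, inv_mul_cancel₀ hcpos.ne']
  have hTtcomp : IsCompactOperator Tt := hBcomp.smul ((c : 𝕜))⁻¹
  have hAx₀ : 1 - η (ε/2)/4 - δ < ‖A x₀‖ := by
    have h1 : ‖T x₀‖ - ‖A x₀‖ ≤ ‖T x₀ - A x₀‖ := norm_sub_norm_le _ _
    have h2 : ‖T x₀ - A x₀‖ ≤ ‖T - A‖ := by
      calc ‖T x₀ - A x₀‖ = ‖(T - A) x₀‖ := by simp
      _ ≤ ‖T - A‖ * ‖x₀‖ := (T - A).le_opNorm x₀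
      _ = ‖T - A‖ := by rw [hx₀, mul_one]
    have h3 : ‖T - A‖ < δ := by rwa [norm_sub_rev]
    linarith
  have hgoal : (1 - η (ε/2)) * c < ‖A x₀‖ := by
    rcases lt_or_ge (1 - η (ε/2)) 0 with h | h
    · exact lt_of_lt_of_le (mul_neg_of_neg_of_pos h hcpos) (norm_nonneg _)
    · have h4 : (1 - η (ε/2)) * c ≤ (1 - η (ε/2)) * (1 + δ) :=
        mul_le_mul_of_nonneg_left hcu h
      have hb : (0:ℝ) ≤ η (ε/2) * δ := mul_nonneg hη2.le hδpos.le
      have h5 : (1 - η (ε/2)) * (1 + δ) = 1 + δ - η (ε/2) - η (ε/2) * δ := by ring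
      linarith
  have hTtx₀ : 1 - η (ε/2) < ‖Tt x₀‖ := by
    have hTtx : ‖Tt x₀‖ = c⁻¹ * ‖A x₀‖ := by
      rw [hTtA x₀, ContinuousLinearMap.smul_apply, norm_smul ((c : 𝕜))⁻¹ (A x₀), hcknorm]
    rw [hTtx, ← div_eq_inv_mul, lt_div_iff₀ hcpos]
    linarith
  obtain ⟨St, x₁, hStc, hStn, hx₁, hStx₁, hxx, hSTt⟩ :=
    hBPBl Tt hTtcomp hTtnorm x₀ hx₀ hTtx₀
  set S : X →L[𝕜] Y := p.subtypeL.comp St with hSdef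
  have hSSt : ∀ x, ‖S x‖ = ‖St x‖ := fun x => rfl
  refine ⟨S, x₁, ?_, ?_, hx₁, ?_, by linarith, ?_⟩
  · have h := hStc.clm_comp p.subtypeL
    simpa [hSdef, ContinuousLinearMap.coe_comp'] using h
  · rw [ContinuousLinearMap.opNorm_ext S St hSSt, hStn]
  · rw [hSSt, hStx₁]
  · have hι : p.subtypeL.comp Tt = ((c : 𝕜))⁻¹ • A := by
      ext x
      simp [hTtdef, hBdef, ContinuousLinearMap.coe_codRestrict_apply,
        Submodule.subtypeL_apply, _root_.map_smul]
    have hn1 : ‖S - p.subtypeL.comp Tt‖ = ‖St - Tt‖ := by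
      rw [hSdef, ← ContinuousLinearMap.comp_sub]
      exact ContinuousLinearMap.opNorm_ext _ _ fun x => rfl
    have heq3 : ((c : 𝕜))⁻¹ • A - T = ((c : 𝕜))⁻¹ • (A - (c : 𝕜) • T) := by
      rw [smul_sub, smul_smul, inv_mul_cancel₀ hck, one_smul]
    have hTc : ‖T - (c : 𝕜) • T‖ ≤ δ := by
      have heq4 : T - (c : 𝕜) • T = ((1 - c : ℝ) : 𝕜) • T := by
        push_cast
        rw [sub_smul, one_smul]
      have h := norm_smul (((1 - c : ℝ)) : 𝕜) T
      calc ‖T - (c : 𝕜) • T‖ = ‖((1 - c : ℝ) : 𝕜)‖ * ‖T‖ := by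
            rw [heq4, h]
      _ = |1 - c| := by rw [RCLike.norm_ofReal, hTnorm, mul_one]
      _ ≤ δ := by rw [abs_sub_comm]; exact le_of_lt (lt_of_le_of_lt hcub hAT)
    have hcinv : c⁻¹ ≤ 4/3 := by
      rw [show (4:ℝ)/3 = ((3:ℝ)/4)⁻¹ by norm_num]
      exact inv_anti₀ (by norm_num) hc3
    have hn2 : ‖((c : 𝕜))⁻¹ • A - T‖ ≤ 8 * δ / 3 := by
      have hAcT : ‖A - (c : 𝕜) • T‖ ≤ 2 * δ := by
        calc ‖A - (c : 𝕜) • T‖ ≤ ‖A - T‖ + ‖T - (c : 𝕜) • T‖ := by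
              have h5 : A - (c : 𝕜) • T = (A - T) + (T - (c : 𝕜) • T) := by abel
              rw [h5]; exact norm_add_le _ _
        _ ≤ 2 * δ := by linarith
      have h6 := norm_smul ((c : 𝕜))⁻¹ (A - (c : 𝕜) • T)
      calc ‖((c : 𝕜))⁻¹ • A - T‖ = ‖((c : 𝕜))⁻¹‖ * ‖A - (c : 𝕜) • T‖ := by
            rw [heq3, h6]
      _ = c⁻¹ * ‖A - (c : 𝕜) • T‖ := by rw [hcknorm]
      _ ≤ (4/3) * (2 * δ) := mul_le_mul hcinv hAcT (norm_nonneg _) (by norm_num)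
      _ = 8 * δ / 3 := by ring
    have hsplit : S - T = (S - p.subtypeL.comp Tt) + (((c : 𝕜))⁻¹ • A - T) := by
      rw [hι]; abel
    calc ‖S - T‖ ≤ ‖S - p.subtypeL.comp Tt‖ + ‖((c : 𝕜))⁻¹ • A - T‖ := by
          rw [hsplit]; exact norm_add_le _ _
    _ < ε/2 + 8 * δ / 3 := by rw [hn1]; linarith
    _ ≤ ε/2 + 8 * (ε/9) / 3 := by linarith
    _ < ε := by linarith
end
end

section
/- Let X₁, X₂ and Y be Banach spaces and let η : (0,∞) → (0,∞) be a function. If the pair (X₁ ⊕₁ X₂, Y) has the BPBp for compact operators with the function η, then both pairs (X₁, Y) and (X₂, Y) have the BPBp for compact operators with the same function η. Likewise, if the pair (X₁ ⊕_∞ X₂, Y) has the BPBp for compact operators with the function η, then both pairs (X₁, Y) and (X₂, Y) have the BPBp for compact operators with the same function η. -/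
open MeasureTheory

noncomputable section

open ContinuousLinearMap

section Auxiliary

variable {𝕜 : Type*} [RCLike 𝕜] {X X' X₁ X₂ Y : Type*}
  [NormedAddCommGroup X] [NormedSpace 𝕜 X]
  [NormedAddCommGroup X'] [NormedSpace 𝕜 X']
  [NormedAddCommGroup X₁] [NormedSpace 𝕜 X₁]
  [NormedAddCommGroup X₂] [NormedSpace 𝕜 X₂]
  [NormedAddCommGroup Y] [NormedSpace 𝕜 Y]

/-- Rank-one operators are compact. -/
theorem BPBpAux.isCompactOperator_smulRight (φ : X →L[𝕜] 𝕜) (u : Y) :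
    IsCompactOperator (φ.smulRight u) := by
  have h : IsCompactOperator (fun c : 𝕜 => c • u) := by
    refine ⟨(fun c : 𝕜 => c • u) '' Metric.closedBall 0 1,
      ((isCompact_closedBall (0:𝕜) 1).image (by fun_prop)), ?_⟩
    exact Filter.mem_of_superset (Metric.closedBall_mem_nhds (0:𝕜) one_pos)
      (Set.subset_preimage_image _ _)
  have h2 : IsCompactOperator ((fun c : 𝕜 => c • u) ∘ φ) := h.comp_clm φ
  have h3 : ⇑(φ.smulRight u) = (fun c : 𝕜 => c • u) ∘ φ := rfl
  rwa [h3]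

/-- The BPBp for compact operators transfers through a linear isometric isomorphism of the
domain. -/
theorem BPBpAux.transfer (e : X ≃ₗᵢ[𝕜] X') {η : ℝ → ℝ}
    (h : BPBpCompactWith 𝕜 X' Y η) : BPBpCompactWith 𝕜 X Y η := by
  intro ε hε
  obtain ⟨hη, H⟩ := h ε hε
  refine ⟨hη, fun T hTc hTn x₀ hx₀ hprem => ?_⟩
  set eC : X' →L[𝕜] X := e.symm.toLinearIsometry.toContinuousLinearMap with heC
  set eD : X →L[𝕜] X' := e.toLinearIsometry.toContinuousLinearMap with heD
  have heCa : ∀ x', eC x' = e.symm x' := fun _ => rfl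
  have heDa : ∀ x, eD x = e x := fun _ => rfl
  have hT'c : IsCompactOperator (T.comp eC) := by
    rw [ContinuousLinearMap.coe_comp']
    exact hTc.comp_clm eC
  have hT'n : ‖T.comp eC‖ = 1 := by
    exact (ContinuousLinearMap.opNorm_comp_linearIsometryEquiv T e.symm).trans hTn
  have hx₀' : ‖e x₀‖ = 1 := by rw [e.norm_map]; exact hx₀
  have hprem' : 1 - η ε < ‖(T.comp eC) (e x₀)‖ := by
    have : (T.comp eC) (e x₀) = T x₀ := by simp [heCa]
    rwa [this]
  obtain ⟨S', x₁', hS'c, hS'n, hx₁', hS'x₁', hd', hST'⟩ :=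
    H (T.comp eC) hT'c hT'n (e x₀) hx₀' hprem'
  refine ⟨S'.comp eD, e.symm x₁', ?_, ?_, ?_, ?_, ?_, ?_⟩
  · rw [ContinuousLinearMap.coe_comp']; exact hS'c.comp_clm eD
  · exact (ContinuousLinearMap.opNorm_comp_linearIsometryEquiv S' e).trans hS'n
  · rw [e.symm.norm_map]; exact hx₁'
  · have : (S'.comp eD) (e.symm x₁') = S' x₁' := by simp [heDa]
    rw [this]; exact hS'x₁'
  · have : x₀ - e.symm x₁' = e.symm (e x₀ - x₁') := by simp [map_sub]
    rw [this, e.symm.norm_map]; exact hd'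
  · have hcomp : (S' - T.comp eC).comp eD = S'.comp eD - T := by
      ext x; simp [heCa, heDa]
    calc ‖S'.comp eD - T‖ = ‖(S' - T.comp eC).comp eD‖ := by rw [hcomp]
    _ = ‖S' - T.comp eC‖ := ContinuousLinearMap.opNorm_comp_linearIsometryEquiv _ e
    _ < ε := hST'

theorem BPBpAux.norm_L1 (z : WithLp 1 (X₁ × X₂)) : ‖z‖ = ‖z.fst‖ + ‖z.snd‖ := by
  rw [WithLp.prod_norm_eq_add (by norm_num)]
  norm_num

theorem BPBpAux.norm_Linf (z : WithLp ⊤ (X₁ × X₂)) : ‖z‖ = ‖z.fst‖ ⊔ ‖z.snd‖ :=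
  WithLp.prod_norm_eq_sup z

/-- The swap map as a linear isometry between `ℓ¹`-sums. -/
def BPBpAux.swapL1 : WithLp 1 (X₂ × X₁) ≃ₗᵢ[𝕜] WithLp 1 (X₁ × X₂) where
  toLinearEquiv :=
    (WithLp.linearEquiv 1 𝕜 (X₂ × X₁)).trans
      ((LinearEquiv.prodComm 𝕜 X₂ X₁).trans (WithLp.linearEquiv 1 𝕜 (X₁ × X₂)).symm)
  norm_map' := fun z => by
    rw [BPBpAux.norm_L1, BPBpAux.norm_L1]
    exact add_comm _ _

/-- The swap map as a linear isometry between `ℓ∞`-sums. -/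
def BPBpAux.swapLinf : WithLp ⊤ (X₂ × X₁) ≃ₗᵢ[𝕜] WithLp ⊤ (X₁ × X₂) where
  toLinearEquiv :=
    (WithLp.linearEquiv ⊤ 𝕜 (X₂ × X₁)).trans
      ((LinearEquiv.prodComm 𝕜 X₂ X₁).trans (WithLp.linearEquiv ⊤ 𝕜 (X₁ × X₂)).symm)
  norm_map' := fun z => by
    rw [BPBpAux.norm_Linf, BPBpAux.norm_Linf]
    exact sup_comm _ _

/-- Transfer of the BPBp for compact operators from an `ℓ¹`-sum to its first summand. -/
theorem BPBpAux.compL1 {η : ℝ → ℝ}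
    (h : BPBpCompactWith 𝕜 (WithLp 1 (X₁ × X₂)) Y η) : BPBpCompactWith 𝕜 X₁ Y η := by
  intro ε hε
  obtain ⟨hη, H⟩ := h ε hε
  refine ⟨hη, fun T hTc hTn x₀ hx₀ hprem => ?_⟩
  set eL : WithLp 1 (X₁ × X₂) ≃L[𝕜] X₁ × X₂ := WithLp.prodContinuousLinearEquiv 1 𝕜 X₁ X₂ with heL
  set P : WithLp 1 (X₁ × X₂) →L[𝕜] X₁ :=
    (ContinuousLinearMap.fst 𝕜 X₁ X₂).comp (eL : WithLp 1 (X₁ × X₂) →L[𝕜] X₁ × X₂) with hP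
  set ι : X₁ →L[𝕜] WithLp 1 (X₁ × X₂) :=
    (eL.symm : X₁ × X₂ →L[𝕜] WithLp 1 (X₁ × X₂)).comp (ContinuousLinearMap.inl 𝕜 X₁ X₂) with hι
  have hPapp : ∀ z : WithLp 1 (X₁ × X₂), P z = z.fst := fun z => rfl
  have hιfst : ∀ x : X₁, (ι x).fst = x := fun x => rfl
  have hιsnd : ∀ x : X₁, (ι x).snd = 0 := fun x => rfl
  have hιnorm : ∀ x : X₁, ‖ι x‖ = ‖x‖ := fun x => by
    rw [BPBpAux.norm_L1, hιfst, hιsnd, norm_zero, add_zero]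
  have hPι : ∀ x : X₁, P (ι x) = x := fun x => rfl
  have hTPc : IsCompactOperator (T.comp P) := by
    rw [ContinuousLinearMap.coe_comp']; exact hTc.comp_clm P
  have hPle : ∀ z : WithLp 1 (X₁ × X₂), ‖P z‖ ≤ ‖z‖ := fun z => by
    rw [hPapp, BPBpAux.norm_L1]; exact le_add_of_nonneg_right (norm_nonneg _)
  have hTPn : ‖T.comp P‖ = 1 := by
    refine le_antisymm (opNorm_le_bound _ zero_le_one fun z => ?_) ?_
    · calc ‖(T.comp P) z‖ ≤ ‖T‖ * ‖P z‖ := T.le_opNorm _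
      _ = ‖P z‖ := by rw [hTn, one_mul]
      _ ≤ 1 * ‖z‖ := by rw [one_mul]; exact hPle z
    · rw [← hTn]
      refine opNorm_le_bound _ (norm_nonneg _) fun x => ?_
      calc ‖T x‖ = ‖(T.comp P) (ι x)‖ := by rw [comp_apply, hPι]
      _ ≤ ‖T.comp P‖ * ‖ι x‖ := (T.comp P).le_opNorm _
      _ = ‖T.comp P‖ * ‖x‖ := by rw [hιnorm]
  have hx₀ne : x₀ ≠ 0 := by
    intro h0; rw [h0, norm_zero] at hx₀; norm_num at hx₀
  have hz₀n : ‖ι x₀‖ = 1 := by rw [hιnorm]; exact hx₀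
  have hprem' : 1 - η ε < ‖(T.comp P) (ι x₀)‖ := by
    rw [comp_apply, hPι]; exact hprem
  obtain ⟨St, z₁, hSc, hSn, hz₁n, hSz₁, hdist, hSTd⟩ :=
    H (T.comp P) hTPc hTPn (ι x₀) hz₀n hprem'
  set a := z₁.fst with ha
  set b := z₁.snd with hb
  have habn : ‖a‖ + ‖b‖ = 1 := by rw [← BPBpAux.norm_L1 z₁]; exact hz₁n
  have hdfst : (ι x₀ - z₁).fst = x₀ - a := rfl
  have hdsnd : (ι x₀ - z₁).snd = 0 - b := rfl
  have hdistval : ‖x₀ - a‖ + ‖b‖ < ε := by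
    have h1 := hdist
    rw [BPBpAux.norm_L1, hdfst, hdsnd, zero_sub, norm_neg] at h1
    exact h1
  by_cases hA : a = 0
  · -- the witness provided by the hypothesis is concentrated on the second summand;
    -- then `ε > 2` and a rank-one operator does the job.
    have hbn : ‖b‖ = 1 := by rw [hA, norm_zero, zero_add] at habn; exact habn
    have h2ε : (2:ℝ) < ε := by
      have h2 : ‖x₀ - a‖ + ‖b‖ = 2 := by rw [hA, sub_zero, hx₀, hbn]; norm_num
      rw [h2] at hdistval; exact hdistval
    have hun : ‖St z₁‖ = 1 := hSz₁
    obtain ⟨φ, hφn, hφx₀⟩ := exists_dual_vector 𝕜 x₀ (norm_ne_zero_iff.mpr hx₀ne)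
    refine ⟨φ.smulRight (St z₁), x₀, BPBpAux.isCompactOperator_smulRight φ (St z₁), ?_, hx₀,
      ?_, by simpa using hε, ?_⟩
    · rw [norm_smulRight_apply, hφn, hun, mul_one]
    · rw [smulRight_apply, norm_smul, hφx₀, hun, mul_one, RCLike.norm_ofReal,
        abs_of_nonneg (norm_nonneg _), hx₀]
    · calc ‖φ.smulRight (St z₁) - T‖ ≤ ‖φ.smulRight (St z₁)‖ + ‖T‖ := norm_sub_le _ _
      _ = 2 := by rw [norm_smulRight_apply, hφn, hun, mul_one, hTn]; norm_num
      _ < ε := h2ε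
  · -- main case : restrict `St` to the first summand
    have hpos : 0 < ‖a‖ := norm_pos_iff.mpr hA
    have hble : ‖b‖ = 1 - ‖a‖ := by linarith
    have hc1 : ‖a‖ ≤ 1 := by
      have := norm_nonneg b; linarith
    set S := St.comp ι with hS
    have hSle : ‖S‖ ≤ 1 := by
      refine opNorm_le_bound _ zero_le_one fun x => ?_
      calc ‖S x‖ ≤ ‖St‖ * ‖ι x‖ := St.le_opNorm _
      _ = 1 * ‖x‖ := by rw [hSn, hιnorm]
  -- decomposition of `St z₁`
    have hwfst : (z₁ - ι a).fst = a - a := rfl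
    have hwsnd : (z₁ - ι a).snd = b - 0 := rfl
    have hwnorm : ‖z₁ - ι a‖ = ‖b‖ := by
      rw [BPBpAux.norm_L1, hwfst, hwsnd, sub_self, norm_zero, zero_add, sub_zero]
    have hSwle : ‖St (z₁ - ι a)‖ ≤ ‖b‖ := by
      calc ‖St (z₁ - ι a)‖ ≤ ‖St‖ * ‖z₁ - ι a‖ := St.le_opNorm _
      _ = ‖b‖ := by rw [hSn, hwnorm, one_mul]
    have hdecomp : St z₁ = S a + St (z₁ - ι a) := by
      rw [hS, comp_apply, ← map_add, add_sub_cancel]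
    have hlow : ‖a‖ ≤ ‖S a‖ := by
      have h1 : (1:ℝ) ≤ ‖S a‖ + ‖St (z₁ - ι a)‖ := by
        rw [← hSz₁, hdecomp]; exact norm_add_le _ _
      linarith
    set x₁ : X₁ := ((‖a‖ : 𝕜))⁻¹ • a with hx₁
    have hx₁n : ‖x₁‖ = 1 := by
      rw [hx₁, norm_smul, norm_inv, RCLike.norm_ofReal, abs_of_nonneg (norm_nonneg a)]
      field_simp
    have hSx₁ : ‖S x₁‖ = 1 := by
      have hge : 1 ≤ ‖S x₁‖ := by
        rw [hx₁, _root_.map_smul, norm_smul, norm_inv, RCLike.norm_ofReal,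
          abs_of_nonneg (norm_nonneg a)]
        rw [show (1:ℝ) = ‖a‖⁻¹ * ‖a‖ by field_simp]
        exact mul_le_mul_of_nonneg_left hlow (by positivity)
      have hle : ‖S x₁‖ ≤ 1 := by
        calc ‖S x₁‖ ≤ ‖S‖ * ‖x₁‖ := S.le_opNorm _
        _ ≤ 1 := by rw [hx₁n, mul_one]; exact hSle
      linarith
    have hSnorm : ‖S‖ = 1 := by
      refine le_antisymm hSle ?_
      calc (1:ℝ) = ‖S x₁‖ := hSx₁.symm
      _ ≤ ‖S‖ * ‖x₁‖ := S.le_opNorm _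
      _ = ‖S‖ := by rw [hx₁n, mul_one]
    refine ⟨S, x₁, ?_, hSnorm, hx₁n, hSx₁, ?_, ?_⟩
    · rw [hS, ContinuousLinearMap.coe_comp']; exact hSc.comp_clm ι
    · have hax₁ : ‖a - x₁‖ = 1 - ‖a‖ := by
        have h0 : a - x₁ = (1 - ((‖a‖ : 𝕜))⁻¹) • a := by rw [sub_smul, one_smul, hx₁]
        rw [h0, norm_smul]
        have h1 : (1 : 𝕜) - ((‖a‖ : 𝕜))⁻¹ = ((1 - (‖a‖)⁻¹ : ℝ) : 𝕜) := by push_cast; ring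
        have h2 : (1 - (‖a‖)⁻¹ : ℝ) ≤ 0 := by
          simp only [sub_nonpos]
          exact (one_le_inv₀ hpos).mpr hc1
        rw [h1, RCLike.norm_ofReal, abs_of_nonpos h2]
        field_simp
        ring
      calc ‖x₀ - x₁‖ = ‖(x₀ - a) + (a - x₁)‖ := by rw [sub_add_sub_cancel]
      _ ≤ ‖x₀ - a‖ + ‖a - x₁‖ := norm_add_le _ _
      _ = ‖x₀ - a‖ + ‖b‖ := by rw [hax₁, hble]
      _ < ε := hdistval
    · have hbound : ‖S - T‖ ≤ ‖St - T.comp P‖ := by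
        refine opNorm_le_bound _ (norm_nonneg _) fun x => ?_
        have h1 : (S - T) x = (St - T.comp P) (ι x) := by
          simp only [ContinuousLinearMap.sub_apply, hS, comp_apply, hPι]
        rw [h1]
        calc ‖(St - T.comp P) (ι x)‖ ≤ ‖St - T.comp P‖ * ‖ι x‖ := (St - T.comp P).le_opNorm _
        _ = ‖St - T.comp P‖ * ‖x‖ := by rw [hιnorm]
      exact lt_of_le_of_lt hbound hSTd

/-- Transfer of the BPBp for compact operators from an `ℓ∞`-sum to its first summand. -/
theorem BPBpAux.compLinf {η : ℝ → ℝ}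
    (h : BPBpCompactWith 𝕜 (WithLp ⊤ (X₁ × X₂)) Y η) : BPBpCompactWith 𝕜 X₁ Y η := by
  intro ε hε
  obtain ⟨hη, H⟩ := h ε hε
  refine ⟨hη, fun T hTc hTn x₀ hx₀ hprem => ?_⟩
  set eL : WithLp ⊤ (X₁ × X₂) ≃L[𝕜] X₁ × X₂ := WithLp.prodContinuousLinearEquiv ⊤ 𝕜 X₁ X₂ with heL
  set P : WithLp ⊤ (X₁ × X₂) →L[𝕜] X₁ :=
    (ContinuousLinearMap.fst 𝕜 X₁ X₂).comp (eL : WithLp ⊤ (X₁ × X₂) →L[𝕜] X₁ × X₂) with hP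
  set ι : X₁ →L[𝕜] WithLp ⊤ (X₁ × X₂) :=
    (eL.symm : X₁ × X₂ →L[𝕜] WithLp ⊤ (X₁ × X₂)).comp (ContinuousLinearMap.inl 𝕜 X₁ X₂) with hι
  have hPapp : ∀ z : WithLp ⊤ (X₁ × X₂), P z = z.fst := fun z => rfl
  have hιfst : ∀ x : X₁, (ι x).fst = x := fun x => rfl
  have hιsnd : ∀ x : X₁, (ι x).snd = 0 := fun x => rfl
  have hιnorm : ∀ x : X₁, ‖ι x‖ = ‖x‖ := fun x => by
    rw [BPBpAux.norm_Linf, hιfst, hιsnd, norm_zero]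
    exact sup_eq_left.mpr (norm_nonneg x)
  have hPι : ∀ x : X₁, P (ι x) = x := fun x => rfl
  have hTPc : IsCompactOperator (T.comp P) := by
    rw [ContinuousLinearMap.coe_comp']; exact hTc.comp_clm P
  have hPle : ∀ z : WithLp ⊤ (X₁ × X₂), ‖P z‖ ≤ ‖z‖ := fun z => by
    rw [hPapp, BPBpAux.norm_Linf]; exact le_sup_left
  have hTPn : ‖T.comp P‖ = 1 := by
    refine le_antisymm (opNorm_le_bound _ zero_le_one fun z => ?_) ?_
    · calc ‖(T.comp P) z‖ ≤ ‖T‖ * ‖P z‖ := T.le_opNorm _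
      _ = ‖P z‖ := by rw [hTn, one_mul]
      _ ≤ 1 * ‖z‖ := by rw [one_mul]; exact hPle z
    · rw [← hTn]
      refine opNorm_le_bound _ (norm_nonneg _) fun x => ?_
      calc ‖T x‖ = ‖(T.comp P) (ι x)‖ := by rw [comp_apply, hPι]
      _ ≤ ‖T.comp P‖ * ‖ι x‖ := (T.comp P).le_opNorm _
      _ = ‖T.comp P‖ * ‖x‖ := by rw [hιnorm]
  have hx₀ne : x₀ ≠ 0 := by
    intro h0; rw [h0, norm_zero] at hx₀; norm_num at hx₀
  have hz₀n : ‖ι x₀‖ = 1 := by rw [hιnorm]; exact hx₀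
  have hprem' : 1 - η ε < ‖(T.comp P) (ι x₀)‖ := by
    rw [comp_apply, hPι]; exact hprem
  obtain ⟨St, z₁, hSc, hSn, hz₁n, hSz₁, hdist, hSTd⟩ :=
    H (T.comp P) hTPc hTPn (ι x₀) hz₀n hprem'
  set a := z₁.fst with ha
  set b := z₁.snd with hb
  have habn : ‖a‖ ⊔ ‖b‖ = 1 := by rw [← BPBpAux.norm_Linf z₁]; exact hz₁n
  have ha1 : ‖a‖ ≤ 1 := habn ▸ le_sup_left
  have hb1 : ‖b‖ ≤ 1 := habn ▸ le_sup_right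
  have hdfst : (ι x₀ - z₁).fst = x₀ - a := rfl
  have hdista : ‖x₀ - a‖ < ε := by
    have h1 := hdist
    rw [BPBpAux.norm_Linf, hdfst] at h1
    exact lt_of_le_of_lt le_sup_left h1
  -- the key map `J φ : x ↦ (x, φ x • b)`
  have hJfact : ∀ φ : X₁ →L[𝕜] 𝕜, ∃ J : X₁ →L[𝕜] WithLp ⊤ (X₁ × X₂),
      (∀ x, (J x).fst = x) ∧ (∀ x, (J x).snd = φ x • b) := by
    intro φ
    refine ⟨(eL.symm : X₁ × X₂ →L[𝕜] WithLp ⊤ (X₁ × X₂)).comp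
      ((ContinuousLinearMap.id 𝕜 X₁).prod (φ.smulRight b)), fun x => rfl, fun x => rfl⟩
  -- a common norm computation
  have hJle : ∀ (φ : X₁ →L[𝕜] 𝕜), ‖φ‖ = 1 → ∀ J : X₁ →L[𝕜] WithLp ⊤ (X₁ × X₂),
      (∀ x, (J x).fst = x) → (∀ x, (J x).snd = φ x • b) → ∀ x, ‖J x‖ ≤ ‖x‖ := by
    intro φ hφn J hJ1 hJ2 x
    rw [BPBpAux.norm_Linf, hJ1, hJ2]
    refine sup_le le_rfl ?_
    calc ‖φ x • b‖ = ‖φ x‖ * ‖b‖ := norm_smul _ _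
    _ ≤ (‖φ‖ * ‖x‖) * ‖b‖ := by
        exact mul_le_mul_of_nonneg_right (φ.le_opNorm x) (norm_nonneg b)
    _ = ‖x‖ * ‖b‖ := by rw [hφn, one_mul]
    _ ≤ ‖x‖ * 1 := mul_le_mul_of_nonneg_left hb1 (norm_nonneg x)
    _ = ‖x‖ := mul_one _
  by_cases hA : ‖a‖ = 1
  · -- the first component of the witness is of norm one
    have hane : a ≠ 0 := by
      intro h0; rw [h0, norm_zero] at hA; norm_num at hA
    obtain ⟨φ, hφn, hφa⟩ := exists_dual_vector 𝕜 a (norm_ne_zero_iff.mpr hane)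
    obtain ⟨J, hJ1, hJ2⟩ := hJfact φ
    have hJb := hJle φ hφn J hJ1 hJ2
    have hJa : J a = z₁ := by
      apply eL.injective
      apply Prod.ext
      · exact hJ1 a
      · rw [show (eL (J a)).snd = (J a).snd from rfl, hJ2, hφa, hA]
        show ((1:ℝ) : 𝕜) • b = b
        simp
    set S := St.comp J with hS
    have hSle : ‖S‖ ≤ 1 := by
      refine opNorm_le_bound _ zero_le_one fun x => ?_
      calc ‖S x‖ ≤ ‖St‖ * ‖J x‖ := St.le_opNorm _
      _ = ‖J x‖ := by rw [hSn, one_mul]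
      _ ≤ 1 * ‖x‖ := by rw [one_mul]; exact hJb x
    have hSa : ‖S a‖ = 1 := by rw [hS, comp_apply, hJa]; exact hSz₁
    have hSnorm : ‖S‖ = 1 := by
      refine le_antisymm hSle ?_
      calc (1:ℝ) = ‖S a‖ := hSa.symm
      _ ≤ ‖S‖ * ‖a‖ := S.le_opNorm _
      _ = ‖S‖ := by rw [hA, mul_one]
    refine ⟨S, a, ?_, hSnorm, hA, hSa, hdista, ?_⟩
    · rw [hS, ContinuousLinearMap.coe_comp']; exact hSc.comp_clm J
    · have hbound : ‖S - T‖ ≤ ‖St - T.comp P‖ := by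
        refine opNorm_le_bound _ (norm_nonneg _) fun x => ?_
        have h1 : (S - T) x = (St - T.comp P) (J x) := by
          have hPJ : P (J x) = x := hJ1 x
          simp only [ContinuousLinearMap.sub_apply, hS, comp_apply, hPJ]
        rw [h1]
        calc ‖(St - T.comp P) (J x)‖ ≤ ‖St - T.comp P‖ * ‖J x‖ := (St - T.comp P).le_opNorm _
        _ ≤ ‖St - T.comp P‖ * ‖x‖ :=
            mul_le_mul_of_nonneg_left (hJb x) (norm_nonneg _)
      exact lt_of_le_of_lt hbound hSTd
  · -- the first component of the witness is short : flatness argument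
    have hA' : ‖a‖ < 1 := lt_of_le_of_ne ha1 hA
    have hyne : St z₁ ≠ 0 := by
      intro h0; rw [h0, norm_zero] at hSz₁; norm_num at hSz₁
    obtain ⟨ξ, hξn, hξy⟩ := exists_dual_vector 𝕜 (St z₁) (norm_ne_zero_iff.mpr hyne)
    have hξy1 : ξ (St z₁) = 1 := by rw [hξy, hSz₁]; norm_num
    -- the functional `x ↦ ξ (St (ι x))` vanishes
    have key : ∀ h : X₁, ‖h‖ ≤ 1 - ‖a‖ → ‖(1:𝕜) + ξ (St (ι h))‖ ≤ 1 := by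
      intro v hv
      have h1 : (1:𝕜) + ξ (St (ι v)) = ξ (St (z₁ + ι v)) := by
        rw [map_add, map_add, hξy1]
      rw [h1]
      have hz : ‖z₁ + ι v‖ ≤ 1 := by
        rw [BPBpAux.norm_Linf]
        refine sup_le ?_ ?_
        · have h2 : (z₁ + ι v).fst = a + v := rfl
          rw [h2]
          calc ‖a + v‖ ≤ ‖a‖ + ‖v‖ := norm_add_le _ _
          _ ≤ 1 := by linarith
        · have h3 : (z₁ + ι v).snd = b + 0 := rfl
          rw [h3, add_zero]; exact hb1
      calc ‖ξ (St (z₁ + ι v))‖ ≤ ‖ξ‖ * ‖St (z₁ + ι v)‖ := ξ.le_opNorm _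
      _ = ‖St (z₁ + ι v)‖ := by rw [hξn, one_mul]
      _ ≤ ‖St‖ * ‖z₁ + ι v‖ := St.le_opNorm _
      _ ≤ 1 := by rw [hSn, one_mul]; exact hz
    have hg0 : ∀ x : X₁, ξ (St (ι x)) = 0 := by
      intro x
      by_contra hne
      have hxne : x ≠ 0 := by
        intro h0
        apply hne
        rw [h0, map_zero, map_zero, map_zero]
      have hgxn : 0 < ‖ξ (St (ι x))‖ := norm_pos_iff.mpr hne
      have hxpos : 0 < ‖x‖ := norm_pos_iff.mpr hxne
      have hrpos : 0 < 1 - ‖a‖ := by linarith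
      set gx := ξ (St (ι x)) with hgx
      set k : 𝕜 := (((1 - ‖a‖) / ‖x‖ : ℝ) : 𝕜) * ((‖gx‖ : ℝ) : 𝕜) * gx⁻¹ with hk
      have hgxne : gx ≠ 0 := hne
      have hkgx : k * gx = (((1 - ‖a‖) / ‖x‖ * ‖gx‖ : ℝ) : 𝕜) := by
        rw [hk, mul_assoc, inv_mul_cancel₀ hgxne, mul_one]
        push_cast
        ring
      have hkval : ξ (St (ι (k • x))) = (((1 - ‖a‖) / ‖x‖ * ‖gx‖ : ℝ) : 𝕜) := by
        rw [_root_.map_smul, _root_.map_smul, _root_.map_smul, smul_eq_mul, ← hgx, hkgx]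
      have hknorm : ‖k • x‖ ≤ 1 - ‖a‖ := by
        rw [norm_smul, hk, norm_mul, norm_mul, norm_inv, RCLike.norm_ofReal,
          RCLike.norm_ofReal, abs_of_nonneg (by positivity : (0:ℝ) ≤ (1 - ‖a‖) / ‖x‖),
          abs_of_nonneg (norm_nonneg gx)]
        rw [show (1 - ‖a‖) / ‖x‖ * ‖gx‖ * ‖gx‖⁻¹ * ‖x‖ = 1 - ‖a‖ by field_simp]
      have hcontr := key (k • x) hknorm
      rw [hkval] at hcontr
      have htpos : (0:ℝ) < (1 - ‖a‖) / ‖x‖ * ‖gx‖ := by positivity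
      rw [show (1:𝕜) + (((1 - ‖a‖) / ‖x‖ * ‖gx‖ : ℝ) : 𝕜)
          = ((1 + (1 - ‖a‖) / ‖x‖ * ‖gx‖ : ℝ) : 𝕜) by push_cast; ring,
        RCLike.norm_ofReal, abs_of_pos (by linarith)] at hcontr
      linarith
    -- now build the final operator, attaining its norm at `x₀`
    obtain ⟨φ, hφn, hφx₀⟩ := exists_dual_vector 𝕜 x₀ (norm_ne_zero_iff.mpr hx₀ne)
    obtain ⟨J, hJ1, hJ2⟩ := hJfact φ
    have hJb := hJle φ hφn J hJ1 hJ2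
    have hφx₀1 : φ x₀ = 1 := by rw [hφx₀, hx₀]; norm_num
    have hJx₀ : J x₀ = ι x₀ + (z₁ - ι a) := by
      apply eL.injective
      apply Prod.ext
      · show (J x₀).fst = (ι x₀ + (z₁ - ι a)).fst
        rw [hJ1]
        show x₀ = x₀ + (a - a)
        simp
      · show (J x₀).snd = (ι x₀ + (z₁ - ι a)).snd
        rw [hJ2, hφx₀1, one_smul]
        show b = 0 + (b - 0)
        simp
    set S := St.comp J with hS
    have hSle : ‖S‖ ≤ 1 := by
      refine opNorm_le_bound _ zero_le_one fun x => ?_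
      calc ‖S x‖ ≤ ‖St‖ * ‖J x‖ := St.le_opNorm _
      _ = ‖J x‖ := by rw [hSn, one_mul]
      _ ≤ 1 * ‖x‖ := by rw [one_mul]; exact hJb x
    have hval : ξ (S x₀) = 1 := by
      have hsplit : S x₀ = St (ι x₀) + (St z₁ - St (ι a)) := by
        rw [hS, comp_apply, hJx₀, map_add, map_sub]
      rw [hsplit, map_add, map_sub, hξy1, hg0 x₀, hg0 a]
      ring
    have hSx₀ : ‖S x₀‖ = 1 := by
      have hge : (1:ℝ) ≤ ‖S x₀‖ := by
        calc (1:ℝ) = ‖ξ (S x₀)‖ := by rw [hval]; norm_num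
        _ ≤ ‖ξ‖ * ‖S x₀‖ := ξ.le_opNorm _
        _ = ‖S x₀‖ := by rw [hξn, one_mul]
      have hle : ‖S x₀‖ ≤ 1 := by
        calc ‖S x₀‖ ≤ ‖S‖ * ‖x₀‖ := S.le_opNorm _
        _ ≤ 1 := by rw [hx₀, mul_one]; exact hSle
      linarith
    have hSnorm : ‖S‖ = 1 := by
      refine le_antisymm hSle ?_
      calc (1:ℝ) = ‖S x₀‖ := hSx₀.symm
      _ ≤ ‖S‖ * ‖x₀‖ := S.le_opNorm _
      _ = ‖S‖ := by rw [hx₀, mul_one]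
    refine ⟨S, x₀, ?_, hSnorm, hx₀, hSx₀, by simpa using hε, ?_⟩
    · rw [hS, ContinuousLinearMap.coe_comp']; exact hSc.comp_clm J
    · have hbound : ‖S - T‖ ≤ ‖St - T.comp P‖ := by
        refine opNorm_le_bound _ (norm_nonneg _) fun x => ?_
        have h1 : (S - T) x = (St - T.comp P) (J x) := by
          have hPJ : P (J x) = x := hJ1 x
          simp only [ContinuousLinearMap.sub_apply, hS, comp_apply, hPJ]
        rw [h1]
        calc ‖(St - T.comp P) (J x)‖ ≤ ‖St - T.comp P‖ * ‖J x‖ := (St - T.comp P).le_opNorm _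
        _ ≤ ‖St - T.comp P‖ * ‖x‖ :=
            mul_le_mul_of_nonneg_left (hJb x) (norm_nonneg _)
      exact lt_of_le_of_lt hbound hSTd

end Auxiliary

/-- Lemma 2.6 (a): the BPBp for compact operators with function η passes from
(X₁ ⊕₁ X₂, Y) and from (X₁ ⊕∞ X₂, Y) to (X₁, Y) and (X₂, Y). -/
theorem bpbp_compact_of_sum_domain {𝕜 : Type*} [RCLike 𝕜] {X₁ X₂ Y : Type*}
    [NormedAddCommGroup X₁] [NormedSpace 𝕜 X₁] [CompleteSpace X₁]
    [NormedAddCommGroup X₂] [NormedSpace 𝕜 X₂] [CompleteSpace X₂]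
    [NormedAddCommGroup Y] [NormedSpace 𝕜 Y] [CompleteSpace Y]
    (η : ℝ → ℝ) :
    (BPBpCompactWith 𝕜 (WithLp 1 (X₁ × X₂)) Y η →
      BPBpCompactWith 𝕜 X₁ Y η ∧ BPBpCompactWith 𝕜 X₂ Y η) ∧
    (BPBpCompactWith 𝕜 (WithLp ⊤ (X₁ × X₂)) Y η →
      BPBpCompactWith 𝕜 X₁ Y η ∧ BPBpCompactWith 𝕜 X₂ Y η) := by
  constructor
  · intro h
    exact ⟨BPBpAux.compL1 h, BPBpAux.compL1 (BPBpAux.transfer BPBpAux.swapL1 h)⟩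
  · intro h
    exact ⟨BPBpAux.compLinf h, BPBpAux.compLinf (BPBpAux.transfer BPBpAux.swapLinf h)⟩
end
end
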